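/- arXiv:1006.0505 — 4 statements merged into one kernel-verified Lean document; each statement's English description precedes it below -/
import Mathlib

section
/- For each p ∈ [0,∞) there exists a constant C > 0 such that for all real s: λ_{p,3}(s) ≤ C if |s| ≤ 1, and λ_{p,3}(s) ≤ C·(1 + |s|^{3p-1}) if |s| > 1. -/
open MeasureTheory ProbabilityTheory Real Set

/-- The standard Gaussian measure `N(0,1)` on `ℝ`. -/
noncomputable def γ : Measure ℝ := gaussianReal 0 1

/-- `λ_p(s) = E|Z+s|^p` for a standard normal `Z`. -/
noncomputable def lam (p s : ℝ) : ℝ := ∫ z, |z + s| ^ p ∂γ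

/-- `λ_{p,m}(s) = E||Z+s|^p − λ_p(s)|^m` for a standard normal `Z`. -/
noncomputable def lamm (p m s : ℝ) : ℝ := ∫ z, (abs (|z + s| ^ p - lam p s)) ^ m ∂γ

instance : IsProbabilityMeasure γ := by unfold γ; infer_instance

/-- pointwise bound `|x|^q ≤ e^{q²} e^{x²/4}`. -/
lemma abs_rpow_le_exp_aux (q : ℝ) (hq : 0 ≤ q) (x : ℝ) :
    |x| ^ q ≤ exp (q ^ 2) * exp (x ^ 2 / 4) := by
  rcases le_or_gt (|x|) 1 with h | h
  · have h1 : |x| ^ q ≤ 1 := Real.rpow_le_one (abs_nonneg x) h hq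
    nlinarith [Real.one_le_exp (by positivity : (0:ℝ) ≤ q ^ 2),
      Real.one_le_exp (by positivity : (0:ℝ) ≤ x ^ 2 / 4),
      Real.exp_pos (q ^ 2), Real.exp_pos (x ^ 2 / 4)]
  · have hx : 0 < |x| := lt_trans one_pos h
    rw [Real.rpow_def_of_pos hx, ← Real.exp_add]
    apply Real.exp_le_exp.mpr
    have hlog : Real.log |x| ≤ |x| := (Real.log_le_sub_one_of_pos hx).trans (by linarith)
    have h2 : q * Real.log |x| ≤ q * |x| := mul_le_mul_of_nonneg_left hlog hq
    nlinarith [sq_nonneg (q - |x| / 2), sq_abs x]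

/-- integrability of `|z+s|^q` w.r.t. the standard Gaussian measure. -/
lemma integrable_rpow_abs_add (q s : ℝ) (hq : 0 ≤ q) :
    Integrable (fun z => |z + s| ^ q) γ := by
  have hγ : γ = volume.withDensity (gaussianPDF 0 1) := gaussianReal_of_var_ne_zero 0 one_ne_zero
  rw [hγ, integrable_withDensity_iff (measurable_gaussianPDF 0 1)
      (ae_of_all _ fun x => by rw [gaussianPDF_def]; exact ENNReal.ofReal_lt_top)]
  have hto : ∀ x : ℝ, ((gaussianPDF 0 1 x).toReal : ℝ)
      = (Real.sqrt (2 * π))⁻¹ * exp (-x ^ 2 / 2) := by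
    intro x
    rw [gaussianPDF_def, ENNReal.toReal_ofReal (gaussianPDFReal_nonneg 0 1 x),
      gaussianPDFReal_def]
    norm_num
  have hgi : Integrable (fun x : ℝ =>
      (exp (q ^ 2) * exp (s ^ 2 / 2) * (Real.sqrt (2 * π))⁻¹)
        * exp (-(1/4 : ℝ) * (x - s) ^ 2)) volume := by
    have h0 : Integrable (fun x : ℝ => exp (-(1/4 : ℝ) * x ^ 2)) volume :=
      integrable_exp_neg_mul_sq (by norm_num)
    exact (h0.comp_sub_right s).const_mul _
  apply hgi.mono'
  · apply Continuous.aestronglyMeasurable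
    have h1 : Continuous fun z : ℝ => |z + s| ^ q :=
      (Real.continuous_rpow_const hq).comp ((continuous_id.add continuous_const).abs)
    exact h1.mul (by
      simp_rw [hto]
      exact continuous_const.mul (((continuous_id.pow 2).neg.div_const 2).rexp))
  · refine ae_of_all _ fun x => ?_
    rw [hto]
    have hnn : 0 ≤ |x + s| ^ q * ((Real.sqrt (2 * π))⁻¹ * exp (-x ^ 2 / 2)) := by positivity
    rw [Real.norm_eq_abs, abs_of_nonneg hnn]
    have hb := abs_rpow_le_exp_aux q hq (x + s)
    have hsq : (0:ℝ) < (Real.sqrt (2 * π))⁻¹ := by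
      rw [inv_pos]
      exact Real.sqrt_pos.mpr (by positivity)
    have step1 : |x + s| ^ q * ((Real.sqrt (2 * π))⁻¹ * exp (-x ^ 2 / 2))
        ≤ (exp (q ^ 2) * exp ((x + s) ^ 2 / 4)) * ((Real.sqrt (2 * π))⁻¹ * exp (-x ^ 2 / 2)) := by
      apply mul_le_mul_of_nonneg_right hb (by positivity)
    refine step1.trans (le_of_eq ?_)
    rw [show exp (q ^ 2) * exp ((x + s) ^ 2 / 4) * ((Real.sqrt (2 * π))⁻¹ * exp (-x ^ 2 / 2))
        = (Real.sqrt (2 * π))⁻¹ * exp (q ^ 2 + (x + s) ^ 2 / 4 + -x ^ 2 / 2) by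
          rw [Real.exp_add, Real.exp_add]; ring,
      show exp (q ^ 2) * exp (s ^ 2 / 2) * (Real.sqrt (2 * π))⁻¹ * exp (-(1/4 : ℝ) * (x - s) ^ 2)
        = (Real.sqrt (2 * π))⁻¹ * exp (q ^ 2 + s ^ 2 / 2 + -(1/4 : ℝ) * (x - s) ^ 2) by
          rw [Real.exp_add, Real.exp_add]; ring]
    congr 1
    ring

lemma integrable_rpow_abs (q : ℝ) (hq : 0 ≤ q) : Integrable (fun z : ℝ => |z| ^ q) γ := by
  simpa using integrable_rpow_abs_add q 0 hq

lemma rpow_add_le_add_rpow_real {a b p : ℝ} (ha : 0 ≤ a) (hb : 0 ≤ b)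
    (hp0 : 0 ≤ p) (hp1 : p ≤ 1) : (a + b) ^ p ≤ a ^ p + b ^ p := by
  rw [← Real.coe_toNNReal a ha, ← Real.coe_toNNReal b hb, ← NNReal.coe_add,
    ← NNReal.coe_rpow, ← NNReal.coe_rpow, ← NNReal.coe_rpow, ← NNReal.coe_add, NNReal.coe_le_coe]
  exact NNReal.rpow_add_le_add_rpow _ _ hp0 hp1

lemma abs_sub_rpow_le (p : ℝ) (hp0 : 0 ≤ p) (hp1 : p ≤ 1) (x y : ℝ) :
    |(|x| ^ p - |y| ^ p)| ≤ |x - y| ^ p := by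
  wlog h : |y| ≤ |x| generalizing x y
  · have := this y x (le_of_not_ge h)
    rwa [abs_sub_comm, abs_sub_comm y x] at this
  rw [abs_of_nonneg (sub_nonneg.mpr (Real.rpow_le_rpow (abs_nonneg y) h hp0))]
  have h1 : |x| ≤ |y| + |x - y| := by
    calc |x| = |y + (x - y)| := by rw [show y + (x - y) = x by ring]
    _ ≤ |y| + |x - y| := abs_add_le _ _
  have h2 : |x| ^ p ≤ (|y| + |x - y|) ^ p := Real.rpow_le_rpow (abs_nonneg x) h1 hp0
  have h3 : (|y| + |x - y|) ^ p ≤ |y| ^ p + |x - y| ^ p :=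
    rpow_add_le_add_rpow_real (abs_nonneg y) (abs_nonneg _) hp0 hp1
  linarith

lemma rpow_sub_rpow_le_mvt {a b p : ℝ} (hb : 0 ≤ b) (hba : b ≤ a) (hp : 1 ≤ p) :
    a ^ p - b ^ p ≤ p * (a - b) * a ^ (p - 1) := by
  rcases eq_or_lt_of_le (hb.trans hba) with h0 | h0
  · have ha : a = 0 := h0.symm
    have hb0 : b = 0 := le_antisymm (ha ▸ hba) hb
    subst ha; subst hb0
    simp [Real.zero_rpow (by positivity : p ≠ 0)]
  · have hu : -1 ≤ b / a - 1 := by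
      have : 0 ≤ b / a := div_nonneg hb h0.le
      linarith
    have hber := one_add_mul_self_le_rpow_one_add hu hp
    rw [show 1 + (b / a - 1) = b / a by ring, Real.div_rpow hb h0.le] at hber
    have hap : 0 < a ^ p := Real.rpow_pos_of_pos h0 p
    have h2 : (1 + p * (b / a - 1)) * a ^ p ≤ b ^ p := by
      have := mul_le_mul_of_nonneg_right hber hap.le
      rwa [div_mul_cancel₀ _ hap.ne'] at this
    have ha_split : a ^ p = a * a ^ (p - 1) := by
      have := Real.rpow_one_add' h0.le (by intro hc; nlinarith : 1 + (p - 1) ≠ 0) (y := p - 1)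
      rwa [show (1:ℝ) + (p - 1) = p by ring] at this
    have e1 : (b / a - 1) * a = b - a := by field_simp
    have e2 : (1 + p * (b / a - 1)) * a ^ p = a ^ p + p * (b - a) * a ^ (p - 1) := by
      calc (1 + p * (b / a - 1)) * a ^ p
          = a ^ p + p * ((b / a - 1) * a) * a ^ (p - 1) := by rw [ha_split]; ring
      _ = a ^ p + p * (b - a) * a ^ (p - 1) := by rw [e1]
    rw [e2] at h2
    have e3 : p * (a - b) * a ^ (p - 1) = -(p * (b - a) * a ^ (p - 1)) := by ring
    linarith [h2, e3]

lemma abs_rpow_sub_abs_rpow {p : ℝ} (hp : 1 ≤ p) (x y : ℝ) :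
    |(|x| ^ p - |y| ^ p)| ≤ p * |x - y| * (|x| ^ (p - 1) + |y| ^ (p - 1)) := by
  wlog h : |y| ≤ |x| generalizing x y
  · have := this y x (le_of_not_ge h)
    rwa [abs_sub_comm, abs_sub_comm y x, add_comm (|y| ^ (p - 1))] at this
  have h0 : |y| ^ p ≤ |x| ^ p := Real.rpow_le_rpow (abs_nonneg y) h (zero_le_one.trans hp)
  rw [abs_of_nonneg (sub_nonneg.mpr h0)]
  have h1 := rpow_sub_rpow_le_mvt (abs_nonneg y) h hp
  have h2 : |x| - |y| ≤ |x - y| := abs_sub_abs_le_abs_sub x y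
  calc |x| ^ p - |y| ^ p ≤ p * (|x| - |y|) * |x| ^ (p - 1) := h1
  _ ≤ p * |x - y| * |x| ^ (p - 1) := by
      apply mul_le_mul_of_nonneg_right (mul_le_mul_of_nonneg_left h2 (by linarith))
        (Real.rpow_nonneg (abs_nonneg x) _)
  _ ≤ p * |x - y| * (|x| ^ (p - 1) + |y| ^ (p - 1)) := by
      apply mul_le_mul_of_nonneg_left
        (le_add_of_nonneg_right (Real.rpow_nonneg (abs_nonneg y) _))
        (mul_nonneg (by linarith) (abs_nonneg _))

lemma two_rpow_bound {a b q : ℝ} (ha : 0 ≤ a) (hb : 0 ≤ b) (hq : 0 ≤ q) :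
    (a + b) ^ q ≤ 2 ^ q * (a ^ q + b ^ q) := by
  have h2 : (0:ℝ) < 2 ^ q := Real.rpow_pos_of_pos two_pos q
  rcases le_total a b with h | h
  · calc (a + b) ^ q ≤ (2 * b) ^ q := Real.rpow_le_rpow (by linarith) (by linarith) hq
    _ = 2 ^ q * b ^ q := Real.mul_rpow (by norm_num) hb
    _ ≤ 2 ^ q * (a ^ q + b ^ q) := by nlinarith [Real.rpow_nonneg ha q]
  · calc (a + b) ^ q ≤ (2 * a) ^ q := Real.rpow_le_rpow (by linarith) (by linarith) hq
    _ = 2 ^ q * a ^ q := Real.mul_rpow (by norm_num) ha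
    _ ≤ 2 ^ q * (a ^ q + b ^ q) := by nlinarith [Real.rpow_nonneg hb q]

/-- master bound: `λ_{p,3}(s) ≤ 4∫D³ + 4(∫D)³` whenever `D` dominates `||z+s|^p - |s|^p|`. -/
lemma master (p : ℝ) (hp : 0 ≤ p) (s : ℝ) (D : ℝ → ℝ)
    (hD : Integrable D γ) (hD3 : Integrable (fun z => D z ^ 3) γ)
    (hDnn : ∀ z, 0 ≤ D z)
    (hbd : ∀ z, |(|z + s| ^ p - |s| ^ p)| ≤ D z) :
    lamm p 3 s ≤ 4 * (∫ z, D z ^ 3 ∂γ) + 4 * (∫ z, D z ∂γ) ^ 3 := by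
  set a := |s| ^ p with ha
  set L := lam p s with hLdef
  set ID := ∫ z, D z ∂γ with hID
  have hIDnn : 0 ≤ ID := integral_nonneg fun z => hDnn z
  have hX : Integrable (fun z => |z + s| ^ p) γ := integrable_rpow_abs_add p s hp
  have hLa : |L - a| ≤ ID := by
    have h1 : ∫ z, (|z + s| ^ p - a) ∂γ = L - a := by
      rw [integral_sub hX (integrable_const a), integral_const, probReal_univ]
      simp [hLdef, lam]
    rw [← h1]
    calc |∫ z, (|z + s| ^ p - a) ∂γ| ≤ ∫ z, |(|z + s| ^ p - a)| ∂γ := by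
          simpa [Real.norm_eq_abs] using
            norm_integral_le_integral_norm (μ := γ) (fun z => |z + s| ^ p - a)
    _ ≤ ∫ z, D z ∂γ := integral_mono (hX.sub (integrable_const a)).abs hD fun z => hbd z
  have hcast : ∀ u : ℝ, u ^ (3:ℝ) = u ^ (3:ℕ) := fun u => by
    rw [← Real.rpow_natCast u 3]; norm_num
  have h3 : lamm p 3 s = ∫ z, |(|z + s| ^ p - L)| ^ (3:ℕ) ∂γ := by
    unfold lamm
    simp_rw [hcast]
    rfl
  rw [h3]
  have hg : Integrable (fun z => 4 * D z ^ 3 + 4 * ID ^ 3) γ :=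
    (hD3.const_mul 4).add (integrable_const _)
  have hmono : ∀ z, |(|z + s| ^ p - L)| ^ (3:ℕ) ≤ 4 * D z ^ 3 + 4 * ID ^ 3 := by
    intro z
    have h4 : |(|z + s| ^ p - L)| ≤ D z + ID := by
      calc |(|z + s| ^ p - L)| ≤ |(|z + s| ^ p - a)| + |a - L| := abs_sub_le _ a _
      _ ≤ D z + ID := add_le_add (hbd z) (by rwa [abs_sub_comm] at hLa)
    have h5 : |(|z + s| ^ p - L)| ^ (3:ℕ) ≤ (D z + ID) ^ (3:ℕ) :=
      pow_le_pow_left₀ (abs_nonneg _) h4 3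
    nlinarith [hDnn z, hIDnn,
      mul_nonneg (add_nonneg (hDnn z) hIDnn) (sq_nonneg (D z - ID))]
  calc ∫ z, |(|z + s| ^ p - L)| ^ (3:ℕ) ∂γ ≤ ∫ z, (4 * D z ^ 3 + 4 * ID ^ 3) ∂γ :=
      integral_mono_of_nonneg (ae_of_all _ fun z => by positivity) hg (ae_of_all _ hmono)
  _ = 4 * (∫ z, D z ^ 3 ∂γ) + 4 * ID ^ 3 := by
      rw [integral_add (hD3.const_mul 4) (integrable_const _), integral_const_mul,
        integral_const, probReal_univ]
      simp

set_option maxHeartbeats 1000000 in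
/-- For `p ∈ [0,∞)` there is `C > 0` such that `λ_{p,3}(s) ≤ C` for `|s| ≤ 1` and
`λ_{p,3}(s) ≤ C·(1+|s|^{3p-1})` for `|s| > 1`. -/
theorem stmt10 (p : ℝ) (hp : 0 ≤ p) :
    ∃ C : ℝ, 0 < C ∧ ∀ s : ℝ,
      (|s| ≤ 1 → lamm p 3 s ≤ C) ∧
      (1 < |s| → lamm p 3 s ≤ C * (1 + |s| ^ (3 * p - 1))) := by
  by_cases hp1 : p ≤ 1
  · -- small exponent case: uniform bound
    set D : ℝ → ℝ := fun z => |z| ^ p with hDdef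
    have hD : Integrable D γ := integrable_rpow_abs p hp
    have hDcast : ∀ z : ℝ, D z ^ (3:ℕ) = |z| ^ (3 * p) := fun z => by
      rw [hDdef]
      rw [← Real.rpow_natCast (|z| ^ p) 3, ← Real.rpow_mul (abs_nonneg z)]
      norm_num [mul_comm]
    have hD3 : Integrable (fun z => D z ^ 3) γ :=
      (integrable_rpow_abs (3 * p) (by linarith)).congr
        (ae_of_all _ fun z => (hDcast z).symm)
    set K := 4 * (∫ z, D z ^ 3 ∂γ) + 4 * (∫ z, D z ∂γ) ^ 3 with hK
    have hKnn : 0 ≤ K := by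
      have i1 : 0 ≤ ∫ z, D z ^ 3 ∂γ :=
        integral_nonneg fun z => by simp only [hDdef]; positivity
      have i2 : 0 ≤ ∫ z, D z ∂γ :=
        integral_nonneg fun z => by simp only [hDdef]; positivity
      have i3 : 0 ≤ (∫ z, D z ∂γ) ^ 3 := pow_nonneg i2 3
      linarith
    refine ⟨K + 1, by linarith, fun s => ?_⟩
    have hles : lamm p 3 s ≤ K := by
      apply master p hp s D hD hD3 (fun z => by simp only [hDdef]; positivity)
      intro z
      simpa using abs_sub_rpow_le p hp hp1 (z + s) s
    constructor
    · intro _; linarith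
    · intro _
      have h1 : 0 ≤ |s| ^ (3 * p - 1) := Real.rpow_nonneg (abs_nonneg s) _
      nlinarith
  · -- large exponent case
    push_neg at hp1
    set A := p * 2 ^ (p - 1 : ℝ) with hA
    set B0 := p * (2 ^ (p - 1 : ℝ) + 1) with hB0
    have h2p : (0:ℝ) < 2 ^ (p - 1 : ℝ) := Real.rpow_pos_of_pos two_pos _
    have hApos : 0 < A := by positivity
    have hB0pos : 0 < B0 := by positivity
    set Mp := ∫ z, |z| ^ p ∂γ with hMp
    set M1 := ∫ z, |z| ∂γ with hM1
    set M3p := ∫ z, |z| ^ (3 * p) ∂γ with hM3p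
    set M3 := ∫ z, |z| ^ (3:ℝ) ∂γ with hM3
    have hMpi : Integrable (fun z : ℝ => |z| ^ p) γ := integrable_rpow_abs p hp
    have hM1i : Integrable (fun z : ℝ => |z|) γ := by
      simpa [Real.rpow_one] using integrable_rpow_abs 1 zero_le_one
    have hM3pi : Integrable (fun z : ℝ => |z| ^ (3 * p)) γ :=
      integrable_rpow_abs (3 * p) (by linarith)
    have hM3i : Integrable (fun z : ℝ => |z| ^ (3:ℝ)) γ :=
      integrable_rpow_abs 3 (by norm_num)
    have hMpnn : 0 ≤ Mp := integral_nonneg fun z => Real.rpow_nonneg (abs_nonneg z) _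
    have hM1nn : 0 ≤ M1 := integral_nonneg fun z => abs_nonneg z
    have hM3pnn : 0 ≤ M3p := integral_nonneg fun z => Real.rpow_nonneg (abs_nonneg z) _
    have hM3nn : 0 ≤ M3 := integral_nonneg fun z => Real.rpow_nonneg (abs_nonneg z) _
    set K1 := 16 * A ^ 3 * (M3p + Mp ^ 3) with hK1
    set K2 := 16 * B0 ^ 3 * (M3 + M1 ^ 3) with hK2
    have hK1nn : 0 ≤ K1 := by
      apply mul_nonneg (by positivity)
      have := pow_nonneg hMpnn 3; linarith
    have hK2nn : 0 ≤ K2 := by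
      apply mul_nonneg (by positivity)
      have := pow_nonneg hM1nn 3; linarith
    -- the main estimate for every s
    have hmain : ∀ s : ℝ, lamm p 3 s ≤ K1 + K2 * (|s| ^ (p - 1 : ℝ)) ^ (3:ℕ) := by
      intro s
      set t := |s| ^ (p - 1 : ℝ) with ht
      have htnn : 0 ≤ t := Real.rpow_nonneg (abs_nonneg s) _
      set D : ℝ → ℝ := fun z => A * |z| ^ p + B0 * t * |z| with hDdef
      have hDnn : ∀ z, 0 ≤ D z := fun z => by
        simp only [hDdef]
        have := Real.rpow_nonneg (abs_nonneg z) p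
        have := abs_nonneg z
        positivity
      have hD : Integrable D γ := (hMpi.const_mul A).add (hM1i.const_mul (B0 * t))
      -- pointwise cube conversions
      have hc1 : ∀ z : ℝ, (|z| ^ p) ^ (3:ℕ) = |z| ^ (3 * p) := fun z => by
        rw [← Real.rpow_natCast (|z| ^ p) 3, ← Real.rpow_mul (abs_nonneg z)]
        norm_num [mul_comm]
      have hc2 : ∀ z : ℝ, |z| ^ (3:ℕ) = |z| ^ (3:ℝ) := fun z => by
        rw [← Real.rpow_natCast (|z|) 3]; norm_num
      -- cube bound for D
      have hcube : ∀ z : ℝ, D z ^ (3:ℕ)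
          ≤ 4 * A ^ 3 * |z| ^ (3 * p) + 4 * (B0 * t) ^ 3 * |z| ^ (3:ℝ) := by
        intro z
        have hu : 0 ≤ A * |z| ^ p := by positivity
        have hv : 0 ≤ B0 * t * |z| := by positivity
        have hexp : D z ^ (3:ℕ) = (A * |z| ^ p + B0 * t * |z|) ^ (3:ℕ) := by rw [hDdef]
        rw [hexp, ← hc1 z, ← hc2 z]
        nlinarith [mul_nonneg (add_nonneg hu hv) (sq_nonneg (A * |z| ^ p - B0 * t * |z|)),
          sq_nonneg (A * |z| ^ p + B0 * t * |z|)]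
      have hgint : Integrable (fun z : ℝ =>
          4 * A ^ 3 * |z| ^ (3 * p) + 4 * (B0 * t) ^ 3 * |z| ^ (3:ℝ)) γ :=
        (hM3pi.const_mul _).add (hM3i.const_mul _)
      have hD3 : Integrable (fun z => D z ^ 3) γ := by
        apply hgint.mono'
        · apply Continuous.aestronglyMeasurable
          have hDc : Continuous D := by
            apply Continuous.add
            · exact continuous_const.mul ((Real.continuous_rpow_const hp).comp continuous_abs)
            · exact continuous_const.mul continuous_abs
          exact hDc.pow 3
        · refine ae_of_all _ fun z => ?_
          rw [Real.norm_eq_abs, abs_of_nonneg (pow_nonneg (hDnn z) 3)]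
          exact hcube z
      -- pointwise domination of the increment
      have hbd : ∀ z : ℝ, |(|z + s| ^ p - |s| ^ p)| ≤ D z := by
        intro z
        have h1 : |(|z + s| ^ p - |s| ^ p)|
            ≤ p * |z| * (|z + s| ^ (p - 1 : ℝ) + |s| ^ (p - 1 : ℝ)) := by
          simpa using abs_rpow_sub_abs_rpow hp1.le (z + s) s
        have h2 : |z + s| ^ (p - 1 : ℝ) ≤ (|z| + |s|) ^ (p - 1 : ℝ) :=
          Real.rpow_le_rpow (abs_nonneg _) (abs_add_le z s) (by linarith)
        have h3 : (|z| + |s|) ^ (p - 1 : ℝ)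
            ≤ 2 ^ (p - 1 : ℝ) * (|z| ^ (p - 1 : ℝ) + |s| ^ (p - 1 : ℝ)) :=
          two_rpow_bound (abs_nonneg z) (abs_nonneg s) (by linarith)
        have hzsplit : |z| * |z| ^ (p - 1 : ℝ) = |z| ^ p := by
          have := Real.rpow_one_add' (abs_nonneg z) (y := p - 1)
            (by intro hc; nlinarith : 1 + (p - 1) ≠ 0)
          rw [show (1:ℝ) + (p - 1) = p by ring] at this
          rw [this]
        have hznn := abs_nonneg z
        have hznn2 := Real.rpow_nonneg (abs_nonneg z) (p - 1 : ℝ)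
        have hsnn2 := Real.rpow_nonneg (abs_nonneg s) (p - 1 : ℝ)
        calc |(|z + s| ^ p - |s| ^ p)|
            ≤ p * |z| * (|z + s| ^ (p - 1 : ℝ) + |s| ^ (p - 1 : ℝ)) := h1
        _ ≤ p * |z| * (2 ^ (p - 1 : ℝ) * (|z| ^ (p - 1 : ℝ) + |s| ^ (p - 1 : ℝ))
              + |s| ^ (p - 1 : ℝ)) := by
            apply mul_le_mul_of_nonneg_left _ (by positivity)
            have := h2.trans h3
            linarith
        _ = A * (|z| * |z| ^ (p - 1 : ℝ)) + B0 * t * |z| := by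
            rw [hA, hB0, ht]; ring
        _ = D z := by rw [hzsplit, hDdef]
      -- compute/bound the integrals
      have hI1 : ∫ z, D z ∂γ = A * Mp + B0 * t * M1 := by
        simp only [hDdef]
        rw [integral_add (hMpi.const_mul A) (hM1i.const_mul (B0 * t)),
          integral_const_mul, integral_const_mul]
      have hI3 : (∫ z, D z ^ 3 ∂γ)
          ≤ 4 * A ^ 3 * M3p + 4 * (B0 * t) ^ 3 * M3 := by
        have step : (∫ z, D z ^ 3 ∂γ) ≤ ∫ z,
            (4 * A ^ 3 * |z| ^ (3 * p) + 4 * (B0 * t) ^ 3 * |z| ^ (3:ℝ)) ∂γ :=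
          integral_mono hD3 hgint fun z => hcube z
        rw [integral_add (hM3pi.const_mul _) (hM3i.const_mul _), integral_const_mul,
          integral_const_mul] at step
        exact step
      have hmaster := master p hp s D hD hD3 hDnn hbd
      have hIDnn : 0 ≤ ∫ z, D z ∂γ := integral_nonneg hDnn
      clear_value A B0 t D Mp M1 M3p M3 K1 K2
      -- final arithmetic
      have hfinal : 4 * (∫ z, D z ^ 3 ∂γ) + 4 * (∫ z, D z ∂γ) ^ 3
          ≤ K1 + K2 * t ^ (3:ℕ) := by
        rw [hI1, hK1, hK2]
        have hx : 0 ≤ A * Mp := by positivity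
        have hy : 0 ≤ B0 * t * M1 := by positivity
        have hcb : (A * Mp + B0 * t * M1) ^ 3
            ≤ 4 * (A * Mp) ^ 3 + 4 * (B0 * t * M1) ^ 3 := by
          nlinarith [mul_nonneg (add_nonneg hx hy) (sq_nonneg (A * Mp - B0 * t * M1))]
        nlinarith [hI3, hcb, mul_nonneg (mul_nonneg hB0pos.le htnn) hM1nn]
      linarith
    set C := K1 + K2 + 1 with hC
    refine ⟨C, by linarith, fun s => ?_⟩
    constructor
    · intro hs
      have ht1 : |s| ^ (p - 1 : ℝ) ≤ 1 :=
        Real.rpow_le_one (abs_nonneg s) hs (by linarith)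
      have htnn : 0 ≤ |s| ^ (p - 1 : ℝ) := Real.rpow_nonneg (abs_nonneg s) _
      have ht3 : (|s| ^ (p - 1 : ℝ)) ^ (3:ℕ) ≤ 1 := pow_le_one₀ htnn ht1
      have hm := hmain s
      nlinarith [mul_le_mul_of_nonneg_left ht3 hK2nn]
    · intro hs
      have htnn : 0 ≤ |s| ^ (p - 1 : ℝ) := Real.rpow_nonneg (abs_nonneg s) _
      have ht3 : (|s| ^ (p - 1 : ℝ)) ^ (3:ℕ) = |s| ^ (3 * p - 3 : ℝ) := by
        rw [← Real.rpow_natCast (|s| ^ (p - 1 : ℝ)) 3, ← Real.rpow_mul (abs_nonneg s)]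
        norm_num
        ring_nf
      have hle : |s| ^ (3 * p - 3 : ℝ) ≤ |s| ^ (3 * p - 1 : ℝ) :=
        Real.rpow_le_rpow_of_exponent_le hs.le (by linarith)
      have hnn : 0 ≤ |s| ^ (3 * p - 1 : ℝ) := Real.rpow_nonneg (abs_nonneg s) _
      have h0 := hmain s
      rw [ht3] at h0
      nlinarith
end

section
/- For each integer m ≥ 1 there exists a constant C > 0 such that for every real s ≥ e one has | E (ln|Z+s|)^m − (ln s)^m | ≤ C. -/
open MeasureTheory ProbabilityTheory Real Set

namespace Stmt12Aux

instance : IsProbabilityMeasure γ :=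
  inferInstanceAs (IsProbabilityMeasure (gaussianReal 0 1))

/-- `x^{k+1} - y^{k+1} ≤ (k+1) x^k (x-y)` for `0 ≤ y ≤ x`. -/
lemma aux_pow_sub (k : ℕ) : ∀ {x y : ℝ}, 0 ≤ y → y ≤ x →
    x ^ (k+1) - y ^ (k+1) ≤ (k+1) * x ^ k * (x - y) := by
  induction k with
  | zero => intro x y hy hxy; simp
  | succ k ih =>
    intro x y hy hxy
    have hx : 0 ≤ x := hy.trans hxy
    have h1 : x ^ (k+1) - y ^ (k+1) ≤ (k+1) * x ^ k * (x - y) := ih hy hxy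
    have h2 : y ^ (k+1) ≤ x ^ (k+1) := pow_le_pow_left₀ hy hxy _
    have h3 : (0:ℝ) ≤ x ^ (k+1) := pow_nonneg hx _
    have key : x ^ (k+2) - y ^ (k+2)
        = x * (x ^ (k+1) - y ^ (k+1)) + (x - y) * y ^ (k+1) := by ring
    have hyk : (0:ℝ) ≤ y ^ (k+1) := pow_nonneg hy _
    have hxy' : 0 ≤ x - y := sub_nonneg.mpr hxy
    calc x ^ (k+2) - y ^ (k+2) = x * (x ^ (k+1) - y ^ (k+1)) + (x - y) * y ^ (k+1) := key
      _ ≤ x * ((k+1) * x ^ k * (x - y)) + (x - y) * x ^ (k+1) := by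
          gcongr
      _ = ((k:ℝ)+1+1) * x ^ (k+1) * (x - y) := by ring
      _ = ((k+1:ℕ)+1) * x ^ (k+1) * (x - y) := by push_cast; ring

/-- `|x^{k+1} - y^{k+1}| ≤ (k+1) M^k |x-y|` for nonneg `x, y ≤ M`. -/
lemma abs_pow_sub_pow (k : ℕ) {x y M : ℝ} (hx : 0 ≤ x) (hy : 0 ≤ y)
    (hxM : x ≤ M) (hyM : y ≤ M) :
    |x ^ (k+1) - y ^ (k+1)| ≤ (k+1) * M ^ k * |x - y| := by
  have hM : 0 ≤ M := hx.trans hxM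
  rcases le_total y x with h | h
  · rw [abs_of_nonneg (sub_nonneg.mpr (pow_le_pow_left₀ hy h _)),
      abs_of_nonneg (sub_nonneg.mpr h)]
    calc x ^ (k+1) - y ^ (k+1) ≤ (k+1) * x ^ k * (x - y) := aux_pow_sub k hy h
      _ ≤ (k+1) * M ^ k * (x - y) := mul_le_mul_of_nonneg_right
          (by gcongr) (sub_nonneg.mpr h)
  · rw [abs_of_nonpos (sub_nonpos.mpr (pow_le_pow_left₀ hx h _)),
      abs_of_nonpos (sub_nonpos.mpr h)]
    have := aux_pow_sub k hx h
    calc -(x ^ (k+1) - y ^ (k+1)) = y ^ (k+1) - x ^ (k+1) := by ring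
      _ ≤ (k+1) * y ^ k * (y - x) := aux_pow_sub k hx h
      _ ≤ (k+1) * M ^ k * (y - x) := mul_le_mul_of_nonneg_right
          (by gcongr) (sub_nonneg.mpr h)
      _ = (k+1) * M ^ k * -(x - y) := by ring

/-- `(log t)^n ≤ n! t` for `t ≥ 1`. -/
lemma log_pow_le (n : ℕ) {t : ℝ} (ht : 1 ≤ t) :
    (Real.log t) ^ n ≤ n.factorial * t := by
  have hx : 0 ≤ Real.log t := Real.log_nonneg ht
  have h := Real.pow_div_factorial_le_exp _ hx n
  rw [Real.exp_log (lt_of_lt_of_le one_pos ht)] at h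
  have hn : (0:ℝ) < n.factorial := by positivity
  calc (Real.log t) ^ n = n.factorial * ((Real.log t) ^ n / n.factorial) := by field_simp
    _ ≤ n.factorial * t := by gcongr

/-- `(-log u)^n ≤ 2^n n! / √u` for `0 < u ≤ 1`. -/
lemma neg_log_pow_le (n : ℕ) {u : ℝ} (hu : 0 < u) (hu1 : u ≤ 1) :
    (-Real.log u) ^ n ≤ 2 ^ n * n.factorial * (Real.sqrt u)⁻¹ := by
  have hx : 0 ≤ -Real.log u := neg_nonneg.mpr (Real.log_nonpos hu.le hu1)
  have h := Real.pow_div_factorial_le_exp _ (by positivity : (0:ℝ) ≤ -Real.log u / 2) n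
  have hexp : Real.exp (-Real.log u / 2) = (Real.sqrt u)⁻¹ := by
    rw [Real.exp_half, Real.exp_neg, Real.exp_log hu, Real.sqrt_inv]
  rw [hexp] at h
  have hn : (0:ℝ) < n.factorial := by positivity
  have h2 : (-Real.log u / 2) ^ n = (-Real.log u) ^ n / 2 ^ n := by
    rw [div_pow]
  rw [h2] at h
  have h3 := (div_le_iff₀ hn).mp h
  have h4 := (div_le_iff₀ (by positivity : (0:ℝ) < 2 ^ n)).mp h3
  calc (-Real.log u) ^ n ≤ (√u)⁻¹ * ↑n.factorial * 2 ^ n := h4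
    _ = 2 ^ n * n.factorial * (Real.sqrt u)⁻¹ := by ring


noncomputable def phi : ℝ → ℝ := gaussianPDFReal 0 1

lemma phi_nonneg (x : ℝ) : 0 ≤ phi x := gaussianPDFReal_nonneg 0 1 x

lemma phi_eq (x : ℝ) : phi x = (Real.sqrt (2 * π))⁻¹ * Real.exp (-(1/2) * x ^ 2) := by
  simp only [phi, gaussianPDFReal]
  norm_num
  left
  ring

lemma phi_le_exp (x : ℝ) : phi x ≤ Real.exp (-(1/2) * x ^ 2) := by
  rw [phi_eq]
  have h1 : (Real.sqrt (2 * π))⁻¹ ≤ 1 := by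
    rw [inv_le_one_iff₀]
    right
    rw [Real.one_le_sqrt]
    nlinarith [Real.pi_gt_three]
  nlinarith [Real.exp_pos (-(1/2) * x ^ 2), Real.sqrt_nonneg (2*π),
    inv_nonneg.mpr (Real.sqrt_nonneg (2*π))]

lemma phi_le_one (x : ℝ) : phi x ≤ 1 := by
  refine (phi_le_exp x).trans ?_
  rw [Real.exp_le_one_iff]
  nlinarith [sq_nonneg x]

lemma measurable_phi : Measurable phi := measurable_gaussianPDFReal 0 1

lemma gamma_eq : γ = volume.withDensity fun x => ((phi x).toNNReal : ENNReal) := by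
  rw [γ, gaussianReal_of_var_ne_zero 0 one_ne_zero]
  rfl

lemma integrable_gamma_iff {g : ℝ → ℝ} :
    Integrable g γ ↔ Integrable (fun x => phi x * g x) volume := by
  rw [gamma_eq, integrable_withDensity_iff_integrable_smul
    measurable_phi.real_toNNReal]
  constructor <;> intro h <;> refine h.congr (Filter.Eventually.of_forall fun x => ?_) <;>
    · simp only [NNReal.smul_def, smul_eq_mul]
      rw [Real.coe_toNNReal _ (phi_nonneg x)]

lemma integral_gamma (g : ℝ → ℝ) :
    ∫ x, g x ∂γ = ∫ x, phi x * g x := by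
  rw [gamma_eq, integral_withDensity_eq_integral_smul measurable_phi.real_toNNReal]
  refine integral_congr_ae (Filter.Eventually.of_forall fun x => ?_)
  simp only [NNReal.smul_def, smul_eq_mul]
  rw [Real.coe_toNNReal _ (phi_nonneg x)]

lemma integrable_one_add_abs : Integrable (fun z : ℝ => 1 + |z|) γ := by
  rw [integrable_gamma_iff]
  have hmaj : Integrable (fun x : ℝ => Real.exp (-(1/2) * x ^ 2)
      + |x * Real.exp (-(1/2) * x ^ 2)|) volume :=
    (integrable_exp_neg_mul_sq (by norm_num : (0:ℝ) < 1/2)).add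
      (integrable_mul_exp_neg_mul_sq (by norm_num : (0:ℝ) < 1/2)).abs
  refine hmaj.mono' ?_ (Filter.Eventually.of_forall fun x => ?_)
  · exact (measurable_phi.mul ((measurable_const.add measurable_abs))).aestronglyMeasurable
  · have h0 : 0 ≤ phi x * (1 + |x|) := mul_nonneg (phi_nonneg x) (by positivity)
    rw [Real.norm_eq_abs, abs_of_nonneg h0, abs_mul,
      abs_of_nonneg (Real.exp_pos _).le]
    have : phi x * (1 + |x|) ≤ Real.exp (-(1/2) * x ^ 2) * (1 + |x|) := by
      gcongr; exact phi_le_exp x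
    calc phi x * (1 + |x|) ≤ Real.exp (-(1/2) * x ^ 2) * (1 + |x|) := this
      _ = Real.exp (-(1/2) * x ^ 2) + |x| * Real.exp (-(1/2) * x ^ 2) := by ring

/-- the singular comparison function -/
noncomputable def g1 : ℝ → ℝ := Set.indicator (Ioo (0:ℝ) 1) (fun u => (Real.sqrt u)⁻¹)

lemma g1_nonneg (u : ℝ) : 0 ≤ g1 u := by
  unfold g1
  apply Set.indicator_nonneg
  intro x _
  positivity

lemma integrable_g1 : Integrable g1 volume := by
  rw [g1, integrable_indicator_iff measurableSet_Ioo]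
  have h : IntegrableOn (fun u : ℝ => u ^ (-(1/2) : ℝ)) (Ioo (0:ℝ) 1) volume := by
    rw [intervalIntegral.integrableOn_Ioo_rpow_iff one_pos]
    norm_num
  refine h.congr_fun (fun u hu => ?_) measurableSet_Ioo
  beta_reduce
  rw [Real.rpow_neg hu.1.le, Real.sqrt_eq_rpow]

lemma integrable_W_gamma (s : ℝ) :
    Integrable (fun z : ℝ => (Real.sqrt |z + s|)⁻¹) γ ∧
      ∫ z, (Real.sqrt |z + s|)⁻¹ ∂γ ≤ 2 * (∫ u, g1 u) + 1 := by
  have hWmeas : Measurable fun z : ℝ => (Real.sqrt |z + s|)⁻¹ :=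
    ((measurable_id.add_const s).abs.sqrt).inv
  have hA : Integrable (fun x : ℝ => g1 (x + s)) volume := integrable_g1.comp_add_right s
  have hB : Integrable (fun x : ℝ => g1 (-(x + s))) volume :=
    (integrable_g1.comp_neg).comp_add_right s
  have hphiInt : Integrable phi volume := integrable_gaussianPDFReal 0 1
  have hAB : Integrable (fun x : ℝ => g1 (x + s) + g1 (-(x + s))) volume := hA.add hB
  have hmajInt : Integrable (fun x : ℝ => g1 (x + s) + g1 (-(x + s)) + phi x) volume :=
    hAB.add hphiInt
  have hmaj : ∀ x : ℝ, phi x * (Real.sqrt |x + s|)⁻¹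
      ≤ g1 (x + s) + g1 (-(x + s)) + phi x := by
    intro x
    set t := x + s with ht
    rcases lt_or_ge |t| 1 with h1 | h1
    · rcases lt_trichotomy t 0 with h2 | h2 | h2
      · have hmem : -t ∈ Ioo (0:ℝ) 1 := ⟨by linarith, by rw [abs_of_neg h2] at h1; linarith⟩
        have : g1 (-t) = (Real.sqrt |t|)⁻¹ := by
          rw [g1, Set.indicator_of_mem hmem, abs_of_neg h2]
        rw [← this]
        have h3 : phi x * g1 (-t) ≤ 1 * g1 (-t) := by
          gcongr
          · exact g1_nonneg _
          · exact phi_le_one x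
        have := g1_nonneg (t)
        have := phi_nonneg x
        linarith [h3]
      · have e1 := g1_nonneg (t)
        have e2 := g1_nonneg (-t)
        have e3 := phi_nonneg x
        rw [h2]
        simp only [abs_zero, Real.sqrt_zero, inv_zero, mul_zero, neg_zero]
        rw [h2] at e1 e2
        simp only [neg_zero] at e2
        linarith
      · have hmem : t ∈ Ioo (0:ℝ) 1 := ⟨h2, by rw [abs_of_pos h2] at h1; linarith⟩
        have : g1 t = (Real.sqrt |t|)⁻¹ := by
          rw [g1, Set.indicator_of_mem hmem, abs_of_pos h2]
        rw [← this]
        have h3 : phi x * g1 t ≤ 1 * g1 t := by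
          gcongr
          · exact g1_nonneg _
          · exact phi_le_one x
        have := g1_nonneg (-t)
        have := phi_nonneg x
        linarith [h3]
    · have hW1 : (Real.sqrt |t|)⁻¹ ≤ 1 := by
        rw [inv_le_one_iff₀]
        right
        rw [Real.one_le_sqrt]
        exact h1
      have h3 : phi x * (Real.sqrt |t|)⁻¹ ≤ phi x * 1 := by
        gcongr
        exact phi_nonneg x
      have := g1_nonneg t
      have := g1_nonneg (-t)
      linarith [h3]
  have hInt : Integrable (fun x : ℝ => phi x * (Real.sqrt |x + s|)⁻¹) volume := by
    refine hmajInt.mono' (measurable_phi.mul hWmeas).aestronglyMeasurable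
      (Filter.Eventually.of_forall fun x => ?_)
    have h0 : 0 ≤ phi x * (Real.sqrt |x + s|)⁻¹ :=
      mul_nonneg (phi_nonneg x) (by positivity)
    rw [Real.norm_eq_abs, abs_of_nonneg h0]
    exact hmaj x
  constructor
  · rw [integrable_gamma_iff]; exact hInt
  · rw [integral_gamma]
    calc ∫ x, phi x * (Real.sqrt |x + s|)⁻¹
        ≤ ∫ x, (g1 (x + s) + g1 (-(x + s)) + phi x) :=
          integral_mono hInt hmajInt hmaj
      _ = (∫ u, g1 u) + (∫ u, g1 u) + 1 := by
          have hphi1 : (∫ x, phi x) = 1 := integral_gaussianPDFReal_eq_one 0 one_ne_zero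
          have hTA : (∫ x : ℝ, g1 (x + s)) = ∫ u, g1 u := integral_add_right_eq_self g1 s
          have hTB : (∫ x : ℝ, g1 (-(x + s))) = ∫ u, g1 u := by
            have h1 : (∫ x : ℝ, g1 (-(x + s))) = ∫ x : ℝ, g1 (-x) :=
              integral_add_right_eq_self (fun y => g1 (-y)) s
            rw [h1]
            exact integral_neg_eq_self g1 volume
          rw [integral_add hAB hphiInt, integral_add hA hB, hphi1, hTA, hTB]
      _ = 2 * (∫ u, g1 u) + 1 := by ring


/-- Key pointwise bound. -/
lemma key (k : ℕ) {s z : ℝ} (hs : Real.exp 1 ≤ s) (hz : z + s ≠ 0) :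
    |Real.log |z + s| ^ (k+1) - Real.log s ^ (k+1)| ≤
      ((2:ℝ)^(k+1) * (k+1) * (k+1).factorial + 5 * (k+1).factorial) * (1 + |z|)
      + ((2:ℝ)^(k+1) * (k+1).factorial) * (Real.sqrt |z + s|)⁻¹ := by
  have hs2 : (2:ℝ) ≤ s := by
    have := Real.add_one_le_exp 1; linarith
  have hs0 : (0:ℝ) < s := by linarith
  have hb1 : 1 ≤ Real.log s := by
    rw [← Real.log_exp 1]
    exact Real.log_le_log (Real.exp_pos 1) hs
  have hb0 : (0:ℝ) ≤ Real.log s := by linarith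
  have hfac : (0:ℝ) < (k+1).factorial := by positivity
  have hW0 : (0:ℝ) ≤ (Real.sqrt |z + s|)⁻¹ := by positivity
  have habs_z : (0:ℝ) ≤ |z| := abs_nonneg z
  set b := Real.log s with hbdef
  set a := Real.log |z + s| with hadef
  rcases le_or_gt |z| (s/2) with h1 | h1
  · -- |z| ≤ s/2
    have hts : s/2 ≤ |z+s| := by
      have h := abs_add_le (z+s) (-z)
      have e : z + s + -z = s := by ring
      rw [e, abs_neg, abs_of_pos hs0] at h
      linarith
    have hts2 : |z+s| ≤ 3/2*s := by
      have := abs_add_le z s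
      rw [abs_of_pos hs0] at this
      linarith
    have ht1 : 1 ≤ |z+s| := by linarith
    have ht0 : (0:ℝ) < |z+s| := by linarith
    have ha0 : 0 ≤ a := Real.log_nonneg ht1
    have hab : a ≤ b + 1 := by
      have h2 : a ≤ Real.log (3/2*s) := Real.log_le_log ht0 hts2
      have h3 : Real.log (3/2*s) = Real.log (3/2) + Real.log s :=
        Real.log_mul (by norm_num) (ne_of_gt hs0)
      have h4 : Real.log (3/2) ≤ 1/2 := by
        have := Real.log_le_sub_one_of_pos (by norm_num : (0:ℝ) < 3/2)
        linarith
      rw [h3] at h2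
      linarith
    have step1 := abs_pow_sub_pow k ha0 hb0 hab (by linarith : b ≤ b + 1)
    have step2 : |a - b| ≤ 2 * (|z| / s) := by
      have hlog : a - b = Real.log (|z+s| / s) :=
        (Real.log_div (ne_of_gt ht0) (ne_of_gt hs0)).symm
      set r := |z+s| / s with hrdef
      have hrpos : 0 < r := by positivity
      have hr1 : 1/2 ≤ r := by
        rw [hrdef, le_div_iff₀ hs0]; linarith
      have hr2 : r ≤ 3/2 := by
        rw [hrdef, div_le_iff₀ hs0]; linarith
      have habs2 : |Real.log r| ≤ 2 * |r - 1| := by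
        rcases le_total 1 r with hc | hc
        · rw [abs_of_nonneg (Real.log_nonneg hc), abs_of_nonneg (by linarith)]
          have := Real.log_le_sub_one_of_pos hrpos
          linarith
        · rw [abs_of_nonpos (Real.log_nonpos hrpos.le hc), abs_of_nonpos (by linarith)]
          have h5 : Real.log r⁻¹ = -Real.log r := Real.log_inv r
          have h6 : Real.log r⁻¹ ≤ r⁻¹ - 1 := Real.log_le_sub_one_of_pos (by positivity)
          have h7 : r⁻¹ ≤ 2 := by
            have := inv_anti₀ (by norm_num : (0:ℝ) < 1/2) hr1
            norm_num at this
            exact this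
          have h9 : r⁻¹ - 1 = (1 - r) * r⁻¹ := by field_simp
          have h8 : r⁻¹ - 1 ≤ 2 * (1 - r) := by
            rw [h9]
            calc (1 - r) * r⁻¹ ≤ (1 - r) * 2 :=
              mul_le_mul_of_nonneg_left h7 (by linarith)
              _ = 2 * (1 - r) := by ring
          linarith
      have hr3 : |r - 1| ≤ |z| / s := by
        have e : r - 1 = (|z+s| - s) / s := by
          rw [hrdef]; field_simp
        rw [e, abs_div, abs_of_pos hs0]
        have e2 : abs (|z+s| - s) ≤ |z| := by
          rw [abs_le]
          constructor
          · have h := abs_add_le (z+s) (-z)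
            have e3 : z + s + -z = s := by ring
            rw [e3, abs_neg, abs_of_pos hs0] at h
            linarith
          · have := abs_add_le z s
            rw [abs_of_pos hs0] at this
            linarith
        gcongr
      rw [hlog]
      calc |Real.log r| ≤ 2 * |r - 1| := habs2
        _ ≤ 2 * (|z| / s) := by linarith
    have step3 : (b + 1)^k ≤ 2^k * (((k+1).factorial : ℝ) * s) := by
      have e1 : (b + 1)^k ≤ (2*b)^k := pow_le_pow_left₀ (by linarith) (by linarith) k
      have e2 : (2*b)^k = 2^k * b^k := mul_pow 2 b k
      have e3 : b^k ≤ b^(k+1) := pow_le_pow_right₀ hb1 (Nat.le_succ k)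
      have e4 : b^(k+1) ≤ ((k+1).factorial : ℝ) * s := log_pow_le (k+1) (by linarith)
      calc (b + 1)^k ≤ 2^k * b^k := by rw [← e2]; exact e1
        _ ≤ 2^k * (((k+1).factorial : ℝ) * s) := by
            have : b^k ≤ ((k+1).factorial : ℝ) * s := e3.trans e4
            gcongr
    calc |a ^ (k+1) - b ^ (k+1)| ≤ (k+1) * (b+1)^k * |a - b| := step1
      _ ≤ ((k:ℝ)+1) * (2^k * (((k+1).factorial : ℝ) * s)) * (2 * (|z| / s)) := by
          refine mul_le_mul (mul_le_mul_of_nonneg_left step3 (by positivity)) step2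
            (abs_nonneg _) (by positivity)
      _ = ((2:ℝ)^(k+1) * (k+1) * (k+1).factorial) * |z| := by
          field_simp
          ring
      _ ≤ ((2:ℝ)^(k+1) * (k+1) * (k+1).factorial + 5 * (k+1).factorial) * (1 + |z|)
          + ((2:ℝ)^(k+1) * (k+1).factorial) * (Real.sqrt |z + s|)⁻¹ := by
          have hp1 : (0:ℝ) < 2^(k+1) := by positivity
          have hp2 : (0:ℝ) ≤ ((2:ℝ)^(k+1) * (k+1).factorial) * (Real.sqrt |z + s|)⁻¹ := by
            positivity
          nlinarith [mul_pos hp1 hfac]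
  · -- s/2 < |z|
    have hz1 : (1:ℝ) ≤ |z| := by linarith
    have hsplit : |a ^ (k+1) - b ^ (k+1)| ≤ |a| ^ (k+1) + b ^ (k+1) := by
      calc |a ^ (k+1) - b ^ (k+1)| ≤ |a ^ (k+1)| + |b ^ (k+1)| := abs_sub _ _
        _ = |a| ^ (k+1) + |b| ^ (k+1) := by rw [abs_pow, abs_pow]
        _ = |a| ^ (k+1) + b ^ (k+1) := by rw [abs_of_nonneg hb0]
    have hbm : b ^ (k+1) ≤ ((k+1).factorial : ℝ) * (2 * |z|) := by
      have e4 : b^(k+1) ≤ ((k+1).factorial : ℝ) * s := log_pow_le (k+1) (by linarith)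
      have : ((k+1).factorial : ℝ) * s ≤ ((k+1).factorial : ℝ) * (2 * |z|) := by
        gcongr
        linarith
      linarith
    rcases le_or_gt 1 |z+s| with h2 | h2
    · have ht0 : (0:ℝ) < |z+s| := by linarith
      have ha0 : 0 ≤ a := Real.log_nonneg h2
      have haz : a ≤ Real.log (3*|z|) := by
        apply Real.log_le_log ht0
        have := abs_add_le z s
        rw [abs_of_pos hs0] at this
        linarith
      have h31 : (1:ℝ) ≤ 3*|z| := by linarith
      have ham : |a| ^ (k+1) ≤ ((k+1).factorial : ℝ) * (3 * |z|) := by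
        rw [abs_of_nonneg ha0]
        calc a ^ (k+1) ≤ (Real.log (3*|z|)) ^ (k+1) :=
              pow_le_pow_left₀ ha0 haz (k+1)
          _ ≤ ((k+1).factorial : ℝ) * (3 * |z|) := log_pow_le (k+1) h31
      have hp2 : (0:ℝ) ≤ ((2:ℝ)^(k+1) * (k+1).factorial) * (Real.sqrt |z + s|)⁻¹ := by
        positivity
      have hp1 : (0:ℝ) ≤ (2:ℝ)^(k+1) * (k+1) * (k+1).factorial := by positivity
      nlinarith
    · have ht0 : (0:ℝ) < |z+s| := abs_pos.mpr hz
      have ha0 : a ≤ 0 := Real.log_nonpos ht0.le h2.le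
      have ham : |a| ^ (k+1) ≤ (2:ℝ)^(k+1) * ((k+1).factorial : ℝ) * (Real.sqrt |z+s|)⁻¹ := by
        rw [abs_of_nonpos ha0]
        exact neg_log_pow_le (k+1) ht0 h2.le
      have hp1 : (0:ℝ) ≤ (2:ℝ)^(k+1) * (k+1) * (k+1).factorial := by positivity
      nlinarith

end Stmt12Aux

/-- For each integer `m ≥ 1` there is `C > 0` such that for every `s ≥ e` one has
`|E (ln|Z+s|)^m − (ln s)^m| ≤ C`. -/
theorem stmt12 (m : ℕ) (hm : 1 ≤ m) :
    ∃ C : ℝ, 0 < C ∧ ∀ s : ℝ, Real.exp 1 ≤ s →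
      |(∫ z, (Real.log |z + s|) ^ m ∂γ) - (Real.log s) ^ m| ≤ C := by
  open Stmt12Aux in
  obtain ⟨k, rfl⟩ : ∃ k, m = k + 1 := ⟨m - 1, (Nat.succ_pred_eq_of_pos hm).symm⟩
  set D : ℝ := (2:ℝ)^(k+1) * (k+1) * (k+1).factorial + 5 * (k+1).factorial with hDdef
  set E : ℝ := (2:ℝ)^(k+1) * (k+1).factorial with hEdef
  set M1 : ℝ := ∫ z, (1 + |z|) ∂γ with hM1def
  set M2 : ℝ := 2 * (∫ u, g1 u) + 1 with hM2def
  have hM1 : 0 ≤ M1 := integral_nonneg fun z => by positivity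
  have hM2 : 0 ≤ M2 := by
    have : 0 ≤ ∫ u, g1 u := integral_nonneg g1_nonneg
    rw [hM2def]; linarith
  have hD : 0 ≤ D := by rw [hDdef]; positivity
  have hE : 0 ≤ E := by rw [hEdef]; positivity
  refine ⟨D * M1 + E * M2 + 1, by positivity, fun s hs => ?_⟩
  -- a.e. nonvanishing
  have h0 : γ {-s} = 0 :=
    gaussianReal_absolutelyContinuous 0 one_ne_zero (measure_singleton (-s))
  have hae : ∀ᵐ z ∂γ, z + s ≠ 0 := by
    rw [ae_iff]
    have hset : {z : ℝ | ¬ z + s ≠ 0} = {-s} := by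
      ext z
      simp [add_eq_zero_iff_eq_neg]
    rw [hset]
    exact h0
  have hkey : ∀ᵐ z ∂γ, |Real.log |z + s| ^ (k+1) - Real.log s ^ (k+1)|
      ≤ D * (1 + |z|) + E * (Real.sqrt |z + s|)⁻¹ :=
    hae.mono fun z hz => key k hs hz
  have hWg := integrable_W_gamma s
  have hmaj : Integrable (fun z : ℝ => D * (1 + |z|) + E * (Real.sqrt |z + s|)⁻¹) γ :=
    (integrable_one_add_abs.const_mul D).add (hWg.1.const_mul E)
  have hfmeas : AEStronglyMeasurable (fun z : ℝ => Real.log |z + s| ^ (k+1)) γ :=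
    ((Real.measurable_log.comp ((measurable_id.add_const s).abs)).pow_const
      (k+1)).aestronglyMeasurable
  have hc0 : 0 ≤ Real.log s ^ (k+1) := by
    have hs0 : (0:ℝ) < s := lt_of_lt_of_le (Real.exp_pos 1) hs
    have : 0 ≤ Real.log s := Real.log_nonneg (le_trans (by
      have := Real.add_one_le_exp 1; linarith) hs)
    positivity
  have hf : Integrable (fun z : ℝ => Real.log |z + s| ^ (k+1)) γ := by
    refine (hmaj.add (integrable_const (Real.log s ^ (k+1)))).mono' hfmeas ?_
    filter_upwards [hkey] with z hz
    simp only [Pi.add_apply]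
    rw [Real.norm_eq_abs]
    have h1 : |Real.log |z + s| ^ (k+1)| - |Real.log s ^ (k+1)|
        ≤ |Real.log |z + s| ^ (k+1) - Real.log s ^ (k+1)| := abs_sub_abs_le_abs_sub _ _
    have h2 : |Real.log s ^ (k+1)| = Real.log s ^ (k+1) := abs_of_nonneg hc0
    linarith
  have hsub : (∫ z, (Real.log |z + s| ^ (k+1) - Real.log s ^ (k+1)) ∂γ)
      = (∫ z, Real.log |z + s| ^ (k+1) ∂γ) - Real.log s ^ (k+1) := by
    rw [integral_sub hf (integrable_const _), integral_const]
    simp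
  have habs : |∫ z, (Real.log |z + s| ^ (k+1) - Real.log s ^ (k+1)) ∂γ|
      ≤ ∫ z, |Real.log |z + s| ^ (k+1) - Real.log s ^ (k+1)| ∂γ := by
    have := norm_integral_le_integral_norm
      (fun z : ℝ => Real.log |z + s| ^ (k+1) - Real.log s ^ (k+1)) (μ := γ)
    simpa [Real.norm_eq_abs] using this
  have hmono : (∫ z, |Real.log |z + s| ^ (k+1) - Real.log s ^ (k+1)| ∂γ)
      ≤ ∫ z, (D * (1 + |z|) + E * (Real.sqrt |z + s|)⁻¹) ∂γ :=
    integral_mono_of_nonneg (Filter.Eventually.of_forall fun z => abs_nonneg _) hmaj hkey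
  have hsplit2 : (∫ z, (D * (1 + |z|) + E * (Real.sqrt |z + s|)⁻¹) ∂γ)
      = D * M1 + E * (∫ z, (Real.sqrt |z + s|)⁻¹ ∂γ) := by
    rw [integral_add (integrable_one_add_abs.const_mul D) (hWg.1.const_mul E),
      integral_const_mul, integral_const_mul]
  have hlast : E * (∫ z, (Real.sqrt |z + s|)⁻¹ ∂γ) ≤ E * M2 :=
    mul_le_mul_of_nonneg_left hWg.2 hE
  rw [← hsub]
  calc |∫ z, (Real.log |z + s| ^ (k+1) - Real.log s ^ (k+1)) ∂γ|
      ≤ ∫ z, |Real.log |z + s| ^ (k+1) - Real.log s ^ (k+1)| ∂γ := habs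
    _ ≤ ∫ z, (D * (1 + |z|) + E * (Real.sqrt |z + s|)⁻¹) ∂γ := hmono
    _ = D * M1 + E * (∫ z, (Real.sqrt |z + s|)⁻¹ ∂γ) := hsplit2
    _ ≤ D * M1 + E * M2 := by linarith
    _ ≤ D * M1 + E * M2 + 1 := by linarith
end

section
/- The function t ↦ λ̃(√t) is concave on [0,∞). -/
open MeasureTheory ProbabilityTheory Real Set

/-- `λ̃(s) = E ln|Z+s|` for a standard normal `Z`. -/
noncomputable def tlam (s : ℝ) : ℝ := ∫ z, Real.log |z + s| ∂γ


/-- pdf as an `ℝ≥0`-valued function -/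
noncomputable def pdfN (x : ℝ) : NNReal := (gaussianPDFReal 0 1 x).toNNReal

lemma pdfN_meas : Measurable pdfN := (measurable_gaussianPDFReal 0 1).real_toNNReal

lemma gamma_eq : γ = volume.withDensity (fun x => (pdfN x : ENNReal)) := by
  rw [γ, gaussianReal_of_var_ne_zero _ one_ne_zero]
  rfl

lemma integral_gamma (f : ℝ → ℝ) :
    ∫ z, f z ∂γ = ∫ z, gaussianPDFReal 0 1 z * f z := by
  rw [gamma_eq, integral_withDensity_eq_integral_smul pdfN_meas]
  refine integral_congr_ae (ae_of_all _ fun z => ?_)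
  simp [pdfN, NNReal.smul_def, Real.coe_toNNReal _ (gaussianPDFReal_nonneg 0 1 z)]

lemma integrable_gamma_iff (f : ℝ → ℝ) :
    Integrable f γ ↔ Integrable (fun z => gaussianPDFReal 0 1 z * f z) := by
  rw [gamma_eq, integrable_withDensity_iff_integrable_smul pdfN_meas]
  constructor <;> intro h <;> refine h.congr (ae_of_all _ fun z => ?_) <;>
    simp [pdfN, NNReal.smul_def, Real.coe_toNNReal _ (gaussianPDFReal_nonneg 0 1 z)]
lemma laplace_gamma (u : ℝ) (hu : 0 ≤ u) (s : ℝ) :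
    ∫ z, Real.exp (-(u * (z + s)^2)) ∂γ
      = Real.exp (-(u * s^2 / (1 + 2*u))) / Real.sqrt (1 + 2*u) := by
  have hb : (0:ℝ) < u + 1/2 := by linarith
  have h12 : (0:ℝ) < 1 + 2*u := by linarith
  rw [integral_gamma]
  have key : ∀ z : ℝ, gaussianPDFReal 0 1 z * Real.exp (-(u * (z + s)^2))
      = ((Real.sqrt (2 * π))⁻¹ * Real.exp (-(u * s^2 / (1 + 2*u)))) *
        Real.exp (-(u + 1/2) * (z + u*s/(u+1/2))^2) := by
    intro z
    simp only [gaussianPDFReal, NNReal.coe_one, mul_one, sub_zero, mul_assoc, ← Real.exp_add]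
    congr 2
    field_simp
    ring
  simp_rw [key]
  rw [integral_const_mul,
    integral_add_right_eq_self (fun z => Real.exp (-(u + 1/2) * z^2)) (u*s/(u+1/2)),
    integral_gaussian]
  have h1 : Real.sqrt (π/(u+1/2)) = Real.sqrt π / Real.sqrt (u+1/2) :=
    Real.sqrt_div pi_pos.le _
  have h2 : Real.sqrt (2*π) = Real.sqrt 2 * Real.sqrt π := Real.sqrt_mul (by norm_num) _
  have h3 : Real.sqrt (1+2*u) = Real.sqrt 2 * Real.sqrt (u+1/2) := by
    rw [show (1+2*u : ℝ) = 2*(u+1/2) by ring, Real.sqrt_mul (by norm_num : (0:ℝ) ≤ 2)]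
  have hπ : Real.sqrt π ≠ 0 := ne_of_gt (Real.sqrt_pos.2 pi_pos)
  have hs2 : Real.sqrt 2 ≠ 0 := by positivity
  have hsb : Real.sqrt (u+1/2) ≠ 0 := ne_of_gt (Real.sqrt_pos.2 hb)
  rw [h1, h2, h3]
  field_simp

lemma ftc_exp (u : ℝ) (hu : u ≠ 0) (a : ℝ) :
    ∫ t in (1:ℝ)..a, Real.exp (-(t*u)) = (Real.exp (-u) - Real.exp (-(a*u)))/u := by
  have hd : ∀ t : ℝ, HasDerivAt (fun t => -(Real.exp (-(t*u))/u)) (Real.exp (-(t*u))) t := by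
    intro t
    have h1 : HasDerivAt (fun t : ℝ => -(t*u)) (-u) t := by
      simpa using ((hasDerivAt_id t).mul_const u).fun_neg
    have h2 := (h1.exp.div_const u).fun_neg
    refine h2.congr_deriv ?_
    rw [mul_neg, neg_div, neg_neg, mul_div_assoc, div_self hu, mul_one]
  rw [intervalIntegral.integral_eq_sub_of_hasDerivAt (fun t _ => hd t)
    ((Continuous.intervalIntegrable (by fun_prop) _ _))]
  field_simp
  ring

lemma frullani_ge_one (a : ℝ) (ha : 1 ≤ a) :
    IntegrableOn (fun u => (Real.exp (-u) - Real.exp (-(a*u)))/u) (Ioi 0) ∧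
      ∫ u in Ioi 0, (Real.exp (-u) - Real.exp (-(a*u)))/u = Real.log a := by
  set ν : Measure ℝ := volume.restrict (Ioc 1 a) with hν
  set μ : Measure ℝ := volume.restrict (Ioi (0:ℝ)) with hμ
  have hinner : ∀ u ∈ Ioi (0:ℝ), ∫ t, Real.exp (-(t*u)) ∂ν
      = (Real.exp (-u) - Real.exp (-(a*u)))/u := by
    intro u hu
    rw [hν, ← intervalIntegral.integral_of_le ha]
    exact ftc_exp u (ne_of_gt hu) a
  have hFmeas : AEStronglyMeasurable (Function.uncurry fun u t => Real.exp (-(t*u)))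
      (μ.prod ν) := by
    apply Continuous.aestronglyMeasurable
    have : Continuous fun p : ℝ × ℝ => Real.exp (-(p.2 * p.1)) := by fun_prop
    exact this
  have hF : Integrable (Function.uncurry fun u t => Real.exp (-(t*u))) (μ.prod ν) := by
    rw [integrable_prod_iff hFmeas]
    constructor
    · exact Filter.Eventually.of_forall fun u => (Continuous.integrableOn_Ioc (by fun_prop))
    · have hb : IntegrableOn (fun u => (a-1) * Real.exp (-u)) (Ioi 0) := by
        have := (exp_neg_integrableOn_Ioi 0 (zero_lt_one)).const_mul (a-1)
        simpa [IntegrableOn] using this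
      refine Integrable.mono' hb (hFmeas.norm.integral_prod_right') ?_
      rw [hμ, ae_restrict_iff' measurableSet_Ioi]
      refine Filter.Eventually.of_forall fun u hu => ?_
      have hnorm : ∀ t : ℝ, ‖Real.exp (-(t*u))‖ = Real.exp (-(t*u)) := fun t =>
        Real.norm_of_nonneg (Real.exp_pos _).le
      simp only [Function.uncurry, hnorm]
      rw [Real.norm_of_nonneg (integral_nonneg fun t => (Real.exp_pos _).le)]
      have hle : ∫ t, Real.exp (-(t*u)) ∂ν ≤ ∫ t, Real.exp (-u) ∂ν := by
        rw [hν]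
        refine setIntegral_mono_on (Continuous.integrableOn_Ioc (by fun_prop))
          (integrableOn_const measure_Ioc_lt_top.ne) measurableSet_Ioc ?_
        intro t ht
        exact Real.exp_le_exp.2 (by nlinarith [ht.1, mem_Ioi.mp hu])
      calc ∫ t, Real.exp (-(t*u)) ∂ν ≤ ∫ t, Real.exp (-u) ∂ν := hle
        _ = (a-1) * Real.exp (-u) := by
            rw [hν, setIntegral_const, measureReal_def, Real.volume_Ioc, smul_eq_mul,
              ENNReal.toReal_ofReal (by linarith)]
  have hint : IntegrableOn (fun u => (Real.exp (-u) - Real.exp (-(a*u)))/u) (Ioi 0) := by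
    refine (hF.integral_prod_left).congr ?_
    rw [hμ]
    filter_upwards [ae_restrict_mem measurableSet_Ioi] with u hu
    exact hinner u hu
  refine ⟨hint, ?_⟩
  have hswap := integral_integral_swap hF
  have lhs_eq : ∫ u, ∫ t, Real.exp (-(t*u)) ∂ν ∂μ
      = ∫ u in Ioi (0:ℝ), (Real.exp (-u) - Real.exp (-(a*u)))/u := by
    rw [hμ]
    exact setIntegral_congr_fun measurableSet_Ioi fun u hu => hinner u hu
  have rhs_eq : ∫ t, ∫ u, Real.exp (-(t*u)) ∂μ ∂ν = Real.log a := by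
    have hin : ∀ t ∈ Ioc (1:ℝ) a, ∫ u, Real.exp (-(t*u)) ∂μ = t⁻¹ := by
      intro t ht
      have ht0 : 0 < t := lt_of_lt_of_le zero_lt_one ht.1.le
      rw [hμ]
      have := integral_comp_mul_left_Ioi (fun y => Real.exp (-y)) 0 ht0
      simp only [mul_zero, smul_eq_mul] at this
      calc ∫ u in Ioi (0:ℝ), Real.exp (-(t*u)) = t⁻¹ * ∫ x in Ioi (0:ℝ), Real.exp (-x) := this
        _ = t⁻¹ := by rw [integral_exp_neg_Ioi_zero, mul_one]
    rw [hν]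
    rw [setIntegral_congr_fun measurableSet_Ioc hin, ← intervalIntegral.integral_of_le ha,
      integral_inv (notMem_uIcc_of_lt zero_lt_one (lt_of_lt_of_le zero_lt_one ha))]
    simp
  rw [← lhs_eq, hswap, rhs_eq]

lemma frullani (a : ℝ) (ha : 0 < a) :
    IntegrableOn (fun u => (Real.exp (-u) - Real.exp (-(a*u)))/u) (Ioi 0) ∧
      ∫ u in Ioi 0, (Real.exp (-u) - Real.exp (-(a*u)))/u = Real.log a := by
  rcases le_or_gt 1 a with h1 | h1
  · exact frullani_ge_one a h1
  · set b := a⁻¹ with hb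
    have hb1 : 1 ≤ b := (one_le_inv₀ ha).2 h1.le
    obtain ⟨hintb, hvalb⟩ := frullani_ge_one b hb1
    set g : ℝ → ℝ := fun u => (Real.exp (-u) - Real.exp (-(b*u)))/u with hg
    have key : ∀ x ∈ Ioi (0:ℝ),
        (Real.exp (-x) - Real.exp (-(a*x)))/x = -a * g (a*x) := by
      intro x hx
      have hx0 : x ≠ 0 := ne_of_gt hx
      have ha0 : a ≠ 0 := ne_of_gt ha
      show _ = -a * ((Real.exp (-(a*x)) - Real.exp (-(b*(a*x))))/(a*x))
      rw [show b*(a*x) = x by rw [hb]; field_simp]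
      field_simp
      ring
    have hcomp : IntegrableOn (fun x => g (a*x)) (Ioi 0) := by
      rw [integrableOn_Ioi_comp_mul_left_iff g 0 ha, mul_zero]
      exact hintb
    constructor
    · refine ((hcomp.const_mul (-a)).congr ?_)
      filter_upwards [ae_restrict_mem measurableSet_Ioi] with x hx
      exact (key x hx).symm
    · rw [setIntegral_congr_fun measurableSet_Ioi key]
      have := integral_comp_mul_left_Ioi g 0 ha
      simp only [mul_zero, smul_eq_mul] at this
      rw [integral_const_mul, this, hvalb]
      rw [hb, Real.log_inv]
      field_simp

lemma pdf_eq (z : ℝ) : gaussianPDFReal 0 1 z = (Real.sqrt (2*π))⁻¹ * Real.exp (-(1/2) * z^2) := by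
  simp only [gaussianPDFReal, NNReal.coe_one, mul_one, sub_zero]
  congr 1
  ring

lemma pdf_le (z : ℝ) : gaussianPDFReal 0 1 z ≤ (Real.sqrt (2*π))⁻¹ := by
  rw [pdf_eq]
  have h1 : Real.exp (-(1/2) * z^2) ≤ 1 := Real.exp_le_one_iff.2 (by nlinarith [sq_nonneg z])
  have h2 : (0:ℝ) ≤ (Real.sqrt (2*π))⁻¹ := by positivity
  nlinarith

lemma abs_log_le {x : ℝ} (hx : |x| ≤ 1) : |Real.log x| ≤ 2 * |x| ^ (-(1/2) : ℝ) := by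
  rcases eq_or_ne x 0 with rfl | hx0
  · simp [Real.log_zero, Real.zero_rpow (by norm_num : (-(1/2):ℝ) ≠ 0)]
  · have hax : 0 < |x| := abs_pos.2 hx0
    have hlogle : Real.log |x| ≤ 0 := Real.log_nonpos (abs_nonneg x) hx
    rw [← Real.log_abs, abs_of_nonpos hlogle]
    have hy : (0:ℝ) < |x| ^ (-(1/2):ℝ) := Real.rpow_pos_of_pos hax _
    have hlog : Real.log (|x| ^ (-(1/2):ℝ)) = -(1/2) * Real.log |x| := Real.log_rpow hax _
    nlinarith [Real.log_le_sub_one_of_pos hy]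

lemma intervalIntegrable_abs_rpow :
    IntervalIntegrable (fun x : ℝ => |x| ^ (-(1/2):ℝ)) volume (-1) 1 := by
  have h1 : IntervalIntegrable (fun x : ℝ => |x| ^ (-(1/2):ℝ)) volume 0 1 := by
    refine (intervalIntegral.intervalIntegrable_rpow' (by norm_num : (-1:ℝ) < -(1/2))).congr ?_
    intro x hx
    rw [Set.uIoc_of_le (zero_le_one)] at hx
    show x ^ (-(1/2):ℝ) = |x| ^ (-(1/2):ℝ)
    rw [abs_of_pos hx.1]
  have h2 : IntervalIntegrable (fun x : ℝ => |x| ^ (-(1/2):ℝ)) volume (-1) 0 := by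
    have h3 := (IntervalIntegrable.iff_comp_neg).1 h1
    simp only [abs_neg, neg_zero] at h3
    exact h3.symm
  exact h2.trans h1

lemma integrable_pdf_log (s : ℝ) :
    Integrable (fun z => gaussianPDFReal 0 1 z * Real.log (z + s)) := by
  have hmeas : AEStronglyMeasurable (fun z => gaussianPDFReal 0 1 z * Real.log (z+s)) volume :=
    ((measurable_gaussianPDFReal 0 1).mul
      (Real.measurable_log.comp (measurable_add_const s))).aestronglyMeasurable
  rw [← integrableOn_univ, ← Set.union_compl_self (Icc (-1-s) (1-s))]
  refine IntegrableOn.union ?_ ?_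
  · refine Integrable.mono'
      (g := fun z => (Real.sqrt (2*π))⁻¹ * (2 * |z+s| ^ (-(1/2):ℝ))) ?_ hmeas.restrict ?_
    · have h1 := intervalIntegrable_abs_rpow.comp_add_right s
      have h2 := (intervalIntegrable_iff_integrableOn_Icc_of_le (by linarith : -1-s ≤ 1-s)).1 h1
      exact (h2.const_mul 2).const_mul _
    · filter_upwards [ae_restrict_mem measurableSet_Icc] with z hz
      have habs : |z + s| ≤ 1 := by
        rw [abs_le]; exact ⟨by linarith [hz.1], by linarith [hz.2]⟩
      rw [Real.norm_eq_abs, abs_mul, abs_of_nonneg (gaussianPDFReal_nonneg 0 1 z)]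
      exact mul_le_mul (pdf_le z) (abs_log_le habs) (abs_nonneg _) (by positivity)
  · refine Integrable.mono'
      (g := fun z => (Real.sqrt (2*π))⁻¹ * (Real.exp (-(1/2) * z^2) * (|z| + |s|)))
      ?_ hmeas.restrict ?_
    · have h1 := (integrable_mul_exp_neg_mul_sq (by norm_num : (0:ℝ) < 1/2)).abs
      have h1' : Integrable (fun z : ℝ => Real.exp (-(1/2) * z^2) * |z|) := by
        refine h1.congr (Filter.Eventually.of_forall fun z => ?_)
        dsimp only
        rw [abs_mul, abs_of_nonneg (Real.exp_pos _).le, mul_comm]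
      have h2 : Integrable (fun z : ℝ => Real.exp (-(1/2) * z^2) * |s|) :=
        (integrable_exp_neg_mul_sq (by norm_num : (0:ℝ) < 1/2)).mul_const _
      refine (((h1'.add h2).const_mul ((Real.sqrt (2*π))⁻¹)).congr
        (Filter.Eventually.of_forall fun z => by simp only [Pi.add_apply]; ring)).integrableOn
    · filter_upwards [ae_restrict_mem measurableSet_Icc.compl] with z hz
      have habs : 1 ≤ |z + s| := by
        simp only [Set.mem_compl_iff, Set.mem_Icc, not_and_or, not_le] at hz
        rcases hz with h | h
        · rw [abs_of_nonpos (by linarith)]; linarith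
        · rw [abs_of_nonneg (by linarith)]; linarith
      have h2 : |Real.log (z+s)| ≤ |z| + |s| := by
        rw [← Real.log_abs, abs_of_nonneg (Real.log_nonneg habs)]
        have := Real.log_le_sub_one_of_pos (lt_of_lt_of_le zero_lt_one habs)
        calc Real.log |z+s| ≤ |z+s| - 1 := this
          _ ≤ |z| + |s| := by have := abs_add_le z s; linarith
      rw [Real.norm_eq_abs, abs_mul, abs_of_nonneg (gaussianPDFReal_nonneg 0 1 z), pdf_eq]
      rw [mul_assoc]
      refine mul_le_mul_of_nonneg_left ?_ (by positivity)
      exact mul_le_mul_of_nonneg_left h2 (Real.exp_pos _).le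

lemma integrable_log_gamma (s : ℝ) : Integrable (fun z => Real.log (z+s)) γ :=
  (integrable_gamma_iff _).2 (integrable_pdf_log s)

lemma frullani_norm (a : ℝ) (ha : 0 < a) :
    ∫ u in Ioi 0, ‖(Real.exp (-u) - Real.exp (-(a*u)))/u‖ = |Real.log a| := by
  rcases le_or_gt 1 a with h | h
  · rw [abs_of_nonneg (Real.log_nonneg h), ← (frullani a ha).2]
    refine setIntegral_congr_fun measurableSet_Ioi fun u hu => ?_
    rw [Real.norm_eq_abs, abs_of_nonneg]
    refine div_nonneg ?_ (le_of_lt hu)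
    have h1 : u ≤ a*u := by nlinarith [mem_Ioi.mp hu]
    have := Real.exp_le_exp.2 (neg_le_neg h1)
    linarith
  · rw [abs_of_neg (Real.log_neg ha h), ← (frullani a ha).2, ← integral_neg]
    refine setIntegral_congr_fun measurableSet_Ioi fun u hu => ?_
    rw [Real.norm_eq_abs, abs_of_nonpos]
    refine div_nonpos_of_nonpos_of_nonneg ?_ (le_of_lt hu)
    have h1 : a*u ≤ u := by nlinarith [mem_Ioi.mp hu]
    have := Real.exp_le_exp.2 (neg_le_neg h1)
    linarith

instance inst_s13 : IsProbabilityMeasure γ := by rw [γ]; infer_instance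

noncomputable def G (t : ℝ) (u : ℝ) : ℝ :=
  (Real.exp (-u) - Real.exp (-(u*t/(1+2*u))) / Real.sqrt (1+2*u))/u

lemma main_identity (t : ℝ) (ht : 0 ≤ t) :
    IntegrableOn (G t) (Ioi 0) ∧ tlam (Real.sqrt t) = (1/2) * ∫ u in Ioi 0, G t u := by
  set s : ℝ := Real.sqrt t with hsdef
  have hs : s^2 = t := Real.sq_sqrt ht
  set ν : Measure ℝ := volume.restrict (Ioi (0:ℝ)) with hν
  set F : ℝ → ℝ → ℝ := fun z u => (Real.exp (-u) - Real.exp (-((z+s)^2*u)))/u with hF_def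
  have hae : ∀ᵐ z ∂γ, z ≠ -s := by
    have h0 : γ {-s} = 0 :=
      gaussianReal_absolutelyContinuous 0 one_ne_zero (Real.volume_singleton)
    rw [ae_iff]
    convert h0 using 2
    ext z
    simp
  have hFmeas : AEStronglyMeasurable (Function.uncurry F) (γ.prod ν) := by
    refine Measurable.aestronglyMeasurable ?_
    have h1 : Measurable fun p : ℝ × ℝ => Real.exp (-p.2) :=
      (measurable_snd.neg).exp
    have h2 : Measurable fun p : ℝ × ℝ =>
        Real.exp (-((p.1+s)^2*p.2)) :=
      ((((measurable_fst.add_const s).pow_const 2).mul measurable_snd).neg).exp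
    exact (h1.sub h2).div measurable_snd
  have hFprod : Integrable (Function.uncurry F) (γ.prod ν) := by
    rw [integrable_prod_iff hFmeas]
    constructor
    · filter_upwards [hae] with z hz
      have hpos : 0 < (z+s)^2 := by
        have : z + s ≠ 0 := fun h => hz (by linarith [h] ; )
        positivity
      exact (frullani _ hpos).1
    · have hlog2 : Integrable (fun z => |Real.log ((z+s)^2)|) γ := by
        have h1 := ((integrable_log_gamma s).const_mul 2).abs
        refine h1.congr (Filter.Eventually.of_forall fun z => ?_)
        dsimp only
        rw [show Real.log ((z+s)^2) = 2 * Real.log (z+s) from by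
          rw [Real.log_pow]; push_cast; ring]
      refine hlog2.congr ?_
      filter_upwards [hae] with z hz
      have hpos : 0 < (z+s)^2 := by
        have : z + s ≠ 0 := fun h => hz (by linarith [h])
        positivity
      exact (frullani_norm _ hpos).symm
  have hswap := integral_integral_swap hFprod
  have hGu : ∀ u ∈ Ioi (0:ℝ), (∫ z, F z u ∂γ) = G t u := by
    intro u hu
    have hu0 : (0:ℝ) < u := hu
    have hexp_int : Integrable (fun z => Real.exp (-(u*(z+s)^2))) γ := by
      refine Integrable.mono' (integrable_const 1)
        (Measurable.aestronglyMeasurable (by fun_prop)) ?_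
      refine Filter.Eventually.of_forall fun z => ?_
      rw [Real.norm_eq_abs, abs_of_pos (Real.exp_pos _)]
      refine Real.exp_le_one_iff.2 ?_
      have : 0 ≤ u*(z+s)^2 := by positivity
      linarith
    have step : ∀ z : ℝ, F z u = (Real.exp (-u) - Real.exp (-(u*(z+s)^2)))/u := by
      intro z
      rw [hF_def]
      dsimp only
      rw [mul_comm ((z+s)^2) u]
    simp_rw [step]
    rw [integral_div, integral_sub (integrable_const _) hexp_int, integral_const,
      measureReal_def, measure_univ, ENNReal.toReal_one, one_smul, laplace_gamma u hu0.le s, hs]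
    rfl
  have hGint : IntegrableOn (G t) (Ioi 0) := by
    refine (hFprod.integral_prod_right).congr ?_
    rw [hν]
    filter_upwards [ae_restrict_mem measurableSet_Ioi] with u hu
    exact hGu u hu
  refine ⟨hGint, ?_⟩
  have lhs_eq : ∫ z, ∫ u, F z u ∂ν ∂γ = ∫ z, Real.log ((z+s)^2) ∂γ := by
    refine integral_congr_ae ?_
    filter_upwards [hae] with z hz
    have hpos : 0 < (z+s)^2 := by
      have : z + s ≠ 0 := fun h => hz (by linarith [h])
      positivity
    exact (frullani _ hpos).2
  have rhs_eq : ∫ u, ∫ z, F z u ∂γ ∂ν = ∫ u in Ioi 0, G t u := by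
    rw [hν]
    exact setIntegral_congr_fun measurableSet_Ioi hGu
  have tlam_eq : tlam s = (1/2) * ∫ z, Real.log ((z+s)^2) ∂γ := by
    rw [tlam]
    have : ∀ z : ℝ, Real.log ((z+s)^2) = 2 * Real.log |z+s| := by
      intro z
      rw [Real.log_abs (z+s), show Real.log ((z+s)^2) = 2 * Real.log (z+s) from by
        rw [Real.log_pow]; push_cast; ring]
    simp_rw [this]
    rw [integral_const_mul]
    ring
  rw [tlam_eq, ← lhs_eq, hswap, rhs_eq]

/-- The function `t ↦ λ̃(√t)` is concave on `[0,∞)`. -/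
theorem stmt13 : ConcaveOn ℝ (Set.Ici 0) (fun t : ℝ => tlam (Real.sqrt t)) := by
  refine ⟨convex_Ici 0, fun x hx y hy a b ha hb hab => ?_⟩
  simp only [smul_eq_mul]
  have hx0 : (0:ℝ) ≤ x := hx
  have hy0 : (0:ℝ) ≤ y := hy
  have hc0 : (0:ℝ) ≤ a*x + b*y := add_nonneg (mul_nonneg ha hx0) (mul_nonneg hb hy0)
  obtain ⟨hIx, hvx⟩ := main_identity x hx0
  obtain ⟨hIy, hvy⟩ := main_identity y hy0
  obtain ⟨hIc, hvc⟩ := main_identity (a*x + b*y) hc0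
  rw [hvx, hvy, hvc]
  have goal_eq : a * (1/2 * (∫ u in Ioi (0:ℝ), G x u)) + b * (1/2 * (∫ u in Ioi (0:ℝ), G y u))
      = 1/2 * (a * (∫ u in Ioi (0:ℝ), G x u) + b * (∫ u in Ioi (0:ℝ), G y u)) := by ring
  rw [goal_eq]
  have key : a * (∫ u in Ioi (0:ℝ), G x u) + b * (∫ u in Ioi (0:ℝ), G y u)
      ≤ ∫ u in Ioi (0:ℝ), G (a*x + b*y) u := by
    have hsum : a * (∫ u in Ioi (0:ℝ), G x u) + b * (∫ u in Ioi (0:ℝ), G y u)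
        = ∫ u in Ioi (0:ℝ), (a * G x u + b * G y u) := by
      rw [integral_add (hIx.const_mul a) (hIy.const_mul b), integral_const_mul,
        integral_const_mul]
    rw [hsum]
    refine setIntegral_mono_on ((hIx.const_mul a).add (hIy.const_mul b)) hIc
      measurableSet_Ioi fun u hu => ?_
    have hu0 : (0:ℝ) < u := hu
    have hS : (0:ℝ) < Real.sqrt (1+2*u) := Real.sqrt_pos.2 (by linarith)
    set p : ℝ := -(u*x/(1+2*u)) with hp
    set q : ℝ := -(u*y/(1+2*u)) with hq
    have hconv := convexOn_exp.2 (Set.mem_univ p) (Set.mem_univ q) ha hb hab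
    simp only [smul_eq_mul] at hconv
    have harg : a * p + b * q = -(u*(a*x+b*y)/(1+2*u)) := by
      rw [hp, hq]; field_simp; ring
    rw [harg] at hconv
    have hdivle : Real.exp (-(u*(a*x+b*y)/(1+2*u))) / Real.sqrt (1+2*u)
        ≤ (a * Real.exp p + b * Real.exp q) / Real.sqrt (1+2*u) := by
      gcongr
    have expand : a * G x u + b * G y u
        = ((a+b) * Real.exp (-u) - (a * Real.exp p + b * Real.exp q) / Real.sqrt (1+2*u))/u := by
      rw [G, G, hp, hq]
      field_simp
      ring
    rw [expand, hab, one_mul]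
    show _ ≤ (Real.exp (-u) - Real.exp (-(u*(a*x+b*y)/(1+2*u))) / Real.sqrt (1+2*u))/u
    rw [div_le_div_iff_of_pos_right hu0]
    linarith [hdivle]
  linarith [key]
end

section
/- There exist constants c > 0 and C > 0 such that for every natural number d ≥ 2 and every real s one has c·min(s²,1)·ln d ≤ μ̃_d(0) − μ̃_d(s) ≤ C·min(s²,1)·ln d. -/
open MeasureTheory ProbabilityTheory Real Set

/-- `μ̃_d(s) = E min(|Z+s|⁻¹, d)` for a standard normal `Z`. -/
noncomputable def tmu (d : ℕ) (s : ℝ) : ℝ := ∫ z, min |z + s|⁻¹ (d : ℝ) ∂γ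

namespace Stmt18

noncomputable def phi (x : ℝ) : ℝ := (Real.sqrt (2 * π))⁻¹ * Real.exp (-x ^ 2 / 2)

lemma phi_eq_gpdf (x : ℝ) : gaussianPDFReal 0 1 x = phi x := by
  simp [gaussianPDFReal, phi]

lemma phi_nonneg (x : ℝ) : 0 ≤ phi x := by
  unfold phi; positivity

lemma sqrt2pi_ge : 2 ≤ Real.sqrt (2 * π) := by
  have h4 : (4:ℝ) ≤ 2 * π := by nlinarith [Real.pi_gt_three]
  have := Real.sqrt_le_sqrt h4
  rwa [show (4:ℝ) = 2^2 by norm_num, Real.sqrt_sq (by norm_num : (0:ℝ) ≤ 2)] at this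

lemma sqrt2pi_le : Real.sqrt (2 * π) ≤ 8/3 := by
  have h : (2 * π : ℝ) ≤ (8/3)^2 := by nlinarith [Real.pi_lt_d2]
  have := Real.sqrt_le_sqrt h
  rwa [Real.sqrt_sq (by norm_num : (0:ℝ) ≤ 8/3)] at this

lemma phi_le_half (x : ℝ) : phi x ≤ 1/2 := by
  unfold phi
  have h1 : Real.exp (-x ^ 2 / 2) ≤ 1 := Real.exp_le_one_iff.2 (by nlinarith [sq_nonneg x])
  have h2 : (Real.sqrt (2 * π))⁻¹ ≤ 1/2 := by
    rw [inv_le_comm₀ (by positivity) (by norm_num)]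
    simpa using sqrt2pi_ge
  calc (Real.sqrt (2 * π))⁻¹ * Real.exp (-x ^ 2 / 2) ≤ (Real.sqrt (2 * π))⁻¹ * 1 := by
        exact mul_le_mul_of_nonneg_left h1 (by positivity)
    _ ≤ 1/2 := by simpa using h2

lemma phi_cont : Continuous phi := by
  unfold phi; fun_prop

lemma phi_ii (a b : ℝ) : IntervalIntegrable phi volume a b := phi_cont.intervalIntegrable a b

lemma phi_even (x : ℝ) : phi (-x) = phi x := by unfold phi; ring_nf

noncomputable def P (a b : ℝ) : ℝ := ∫ x in a..b, phi x

instance : IsProbabilityMeasure γ := by unfold γ; infer_instance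

lemma gamma_Icc {a b : ℝ} (h : a ≤ b) : (γ (Icc a b)).toReal = P a b := by
  rw [show γ = gaussianReal 0 1 from rfl, gaussianReal_apply_eq_integral 0 one_ne_zero,
    ENNReal.toReal_ofReal (setIntegral_nonneg measurableSet_Icc fun x _ => gaussianPDFReal_nonneg 0 1 x),
    integral_Icc_eq_integral_Ioc, ← intervalIntegral.integral_of_le h]
  exact intervalIntegral.integral_congr fun x _ => phi_eq_gpdf x

lemma P_nonneg {a b : ℝ} (h : a ≤ b) : 0 ≤ P a b :=
  intervalIntegral.integral_nonneg h (fun x _ => phi_nonneg x)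

lemma P_le_one {a b : ℝ} (h : a ≤ b) : P a b ≤ 1 := by
  rw [← gamma_Icc h]
  have h1 : γ (Icc a b) ≤ 1 := le_trans (measure_mono (subset_univ _)) (by simp)
  exact le_trans (ENNReal.toReal_mono (by simp) h1) (by simp)

lemma gamma_singleton (x : ℝ) : γ {x} = 0 := by
  rw [show γ = gaussianReal 0 1 from rfl, gaussianReal_apply_eq_integral 0 one_ne_zero]
  rw [show (volume : Measure ℝ).restrict {x} = 0 from Measure.restrict_eq_zero.2 (by simp),
    integral_zero_measure]
  simp

lemma P_symm_center (s r : ℝ) : P (-s - r) (-s + r) = P (s - r) (s + r) := by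
  unfold P
  have h := intervalIntegral.integral_comp_neg (f := phi) (a := s - r) (b := s + r)
  simp only [phi_even] at h
  rw [h]
  congr 1 <;> ring



lemma tmu_rep (d : ℕ) (s : ℝ) :
    tmu d s = ∫ t in Ioc 0 (d : ℝ), P (-s - t⁻¹) (-s + t⁻¹) := by
  have hmeas : Measurable fun z : ℝ => min |z + s|⁻¹ (d : ℝ) :=
    ((measurable_id.add_const s).abs.inv).min measurable_const
  have hnn : ∀ z : ℝ, 0 ≤ min |z + s|⁻¹ (d : ℝ) :=
    fun z => le_min (inv_nonneg.2 (abs_nonneg _)) (Nat.cast_nonneg d)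
  have hint : Integrable (fun z => min |z + s|⁻¹ (d : ℝ)) γ := by
    refine Integrable.mono' (integrable_const (d : ℝ)) hmeas.aestronglyMeasurable
      (ae_of_all _ fun z => ?_)
    rw [Real.norm_eq_abs, abs_of_nonneg (hnn z)]
    exact min_le_right _ _
  rw [tmu, hint.integral_eq_integral_Ioc_meas_le (ae_of_all _ hnn)
      (ae_of_all _ fun z => min_le_right _ _)]
  refine setIntegral_congr_fun measurableSet_Ioc fun t ht => ?_
  obtain ⟨ht0, htd⟩ := ht
  have hinv0 : 0 ≤ t⁻¹ := inv_nonneg.2 ht0.le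
  have hset : {z : ℝ | t ≤ min |z + s|⁻¹ (d:ℝ)} = Icc (-s - t⁻¹) (-s + t⁻¹) \ {-s} := by
    ext z
    simp only [mem_setOf_eq, le_min_iff, mem_diff, mem_Icc, mem_singleton_iff]
    constructor
    · rintro ⟨h1, -⟩
      have hz : z ≠ -s := by
        intro h
        rw [h] at h1
        simp at h1
        linarith
      have habs : 0 < |z + s| := abs_pos.2 (fun h => hz (by linarith))
      have h2 : |z + s| ≤ t⁻¹ := (le_inv_comm₀ ht0 habs).1 h1
      rw [abs_le] at h2
      exact ⟨⟨by linarith [h2.1], by linarith [h2.2]⟩, hz⟩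
    · rintro ⟨⟨h1, h2⟩, hz⟩
      have habs : 0 < |z + s| := abs_pos.2 (fun h => hz (by linarith))
      have h3 : |z + s| ≤ t⁻¹ := abs_le.2 ⟨by linarith, by linarith⟩
      exact ⟨(le_inv_comm₀ ht0 habs).2 h3, htd⟩
  rw [hset, measureReal_def, measure_diff_null (gamma_singleton (-s)), gamma_Icc (by linarith)]

lemma K_eq (s r : ℝ) :
    P (-r) r - P (-s - r) (-s + r) = ∫ x in (0:ℝ)..s, (phi (r - x) - phi (r + x)) := by
  have c1 : Continuous fun x : ℝ => phi (r - x) := phi_cont.comp (continuous_const.sub continuous_id)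
  have c2 : Continuous fun x : ℝ => phi (r + x) := phi_cont.comp (continuous_const.add continuous_id)
  have i1 : (∫ x in (0:ℝ)..s, phi (r - x)) = P (-s + r) r := by
    rw [intervalIntegral.integral_comp_sub_left phi r]
    unfold P
    congr 1 <;> ring
  have i2 : (∫ x in (0:ℝ)..s, phi (r + x)) = P (-s - r) (-r) := by
    rw [intervalIntegral.integral_comp_add_left phi r]
    have h := intervalIntegral.integral_comp_neg (f := phi) (a := r) (b := r + s)
    simp only [phi_even] at h
    unfold P
    rw [add_zero, h]
    congr 1 <;> ring
  rw [intervalIntegral.integral_sub (c1.intervalIntegrable 0 s) (c2.intervalIntegrable 0 s), i1, i2]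
  have a1 := intervalIntegral.integral_add_adjacent_intervals (phi_ii (-s-r) (-r)) (phi_ii (-r) r)
  have a2 := intervalIntegral.integral_add_adjacent_intervals (phi_ii (-s-r) (-s+r)) (phi_ii (-s+r) r)
  unfold P at *
  linarith



lemma c_lb : 3/8 ≤ (Real.sqrt (2 * π))⁻¹ := by
  have hpos : 0 < Real.sqrt (2 * π) := by positivity
  have hc : (Real.sqrt (2 * π))⁻¹ * Real.sqrt (2 * π) = 1 := inv_mul_cancel₀ hpos.ne'
  nlinarith [sqrt2pi_le, inv_nonneg.2 hpos.le]

lemma c_ub : (Real.sqrt (2 * π))⁻¹ ≤ 1/2 := by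
  have hpos : 0 < Real.sqrt (2 * π) := by positivity
  have hc : (Real.sqrt (2 * π))⁻¹ * Real.sqrt (2 * π) = 1 := inv_mul_cancel₀ hpos.ne'
  nlinarith [sqrt2pi_ge, inv_nonneg.2 hpos.le]

lemma diff_nonneg {r x : ℝ} (hr : 0 ≤ r) (hx : 0 ≤ x) : 0 ≤ phi (r - x) - phi (r + x) := by
  unfold phi
  have h : Real.exp (-(r+x)^2/2) ≤ Real.exp (-(r-x)^2/2) := by
    apply Real.exp_le_exp.2
    nlinarith
  have h0 : (0:ℝ) ≤ (Real.sqrt (2*π))⁻¹ := by positivity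
  nlinarith

lemma ye_le_one {y : ℝ} (hy : 0 ≤ y) : y * Real.exp (-y^2/2) ≤ 1 := by
  have h1 : y ≤ Real.exp (y^2/2) := by nlinarith [Real.add_one_le_exp (y^2/2), sq_nonneg (y-1)]
  calc y * Real.exp (-y^2/2) ≤ Real.exp (y^2/2) * Real.exp (-y^2/2) :=
        mul_le_mul_of_nonneg_right h1 (Real.exp_nonneg _)
    _ = 1 := by rw [← Real.exp_add]; ring_nf; exact Real.exp_zero

lemma key_upper {r x : ℝ} (hr : 0 ≤ r) (hx0 : 0 ≤ x) (hx1 : x ≤ 1) :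
    phi (r - x) - phi (r + x) ≤ x * min r 2 := by
  set c := (Real.sqrt (2*π))⁻¹ with hcdef
  have hc0 : 0 ≤ c := by positivity
  have hc : c ≤ 1/2 := c_ub
  set A := (r-x)^2/2 with hA
  set B := (r+x)^2/2 with hB
  have hBA : B - A = 2*r*x := by rw [hA, hB]; ring
  have hphi : phi (r - x) - phi (r + x) = c * (Real.exp (-A) - Real.exp (-B)) := by
    unfold phi; rw [hA, hB, hcdef]; ring_nf
  have e1 : Real.exp (-B) = Real.exp (-A) * Real.exp (A-B) := by rw [← Real.exp_add]; ring_nf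
  have e2 : 1 - Real.exp (A-B) ≤ B - A := by
    have := Real.add_one_le_exp (A-B); linarith
  have hDpos : 0 < Real.exp (-A) := Real.exp_pos _
  have h1 : Real.exp (-A) - Real.exp (-B) ≤ 2*r*x * Real.exp (-A) := by
    calc Real.exp (-A) - Real.exp (-B) = Real.exp (-A) * (1 - Real.exp (A-B)) := by rw [e1]; ring
      _ ≤ Real.exp (-A) * (B - A) := mul_le_mul_of_nonneg_left e2 hDpos.le
      _ = 2*r*x * Real.exp (-A) := by rw [hBA]; ring
  have hexpA1 : Real.exp (-A) ≤ 1 := Real.exp_le_one_iff.2 (by nlinarith [sq_nonneg (r-x)])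
  have hmain : c * (Real.exp (-A) - Real.exp (-B)) ≤ c * (2*r*x * Real.exp (-A)) :=
    mul_le_mul_of_nonneg_left h1 hc0
  rcases le_total r 2 with h | h
  · rw [min_eq_left h, hphi]
    have e1' : 2*r*x*Real.exp (-A) ≤ 2*r*x := by nlinarith [mul_nonneg hr hx0]
    have step : c * (2*r*x*Real.exp (-A)) ≤ (1/2) * (2*r*x) :=
      mul_le_mul hc e1' (by positivity) (by norm_num)
    linarith
  · rw [min_eq_right h, hphi]
    have hre : r * Real.exp (-A) ≤ 2 := by
      rcases le_total r x with hrx | hrx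
      · nlinarith
      · have hy : 0 ≤ r - x := by linarith
        have hx' : x * Real.exp (-A) ≤ x := by nlinarith
        have hy' : (r - x) * Real.exp (-A) ≤ 1 := by
          have h2 : (r-x) * Real.exp (-((r-x)^2/2)) ≤ 1 := by
            have := ye_le_one hy
            convert this using 3
            ring
          have hAeq : -A = -((r-x)^2/2) := by rw [hA]
          rw [hAeq]
          exact h2
        nlinarith
    have step : c * (2*r*x*Real.exp (-A)) ≤ x * 2 := by
      have t2 : 2*x*(r*Real.exp (-A)) ≤ 2*x*2 :=
        mul_le_mul_of_nonneg_left hre (by positivity)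
      calc c * (2*r*x*Real.exp (-A)) = c * (2*x*(r*Real.exp (-A))) := by ring
        _ ≤ c * (2*x*2) := mul_le_mul_of_nonneg_left t2 hc0
        _ ≤ (1/2) * (2*x*2) := mul_le_mul_of_nonneg_right hc (by positivity)
        _ = x*2 := by ring
    linarith

lemma key_lower {r x : ℝ} (hr0 : 0 ≤ r) (hr1 : r ≤ 1) (hx0 : 0 ≤ x) (hx1 : x ≤ 1) :
    r * x / 8 ≤ phi (r - x) - phi (r + x) := by
  set c := (Real.sqrt (2*π))⁻¹ with hcdef
  have hc : 3/8 ≤ c := c_lb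
  set A := (r-x)^2/2 with hA
  set B := (r+x)^2/2 with hB
  set u := 2*r*x with hu
  have hu0 : 0 ≤ u := by positivity
  have hu2 : u ≤ 2 := by nlinarith
  have hBA : B - A = u := by rw [hA, hB, hu]; ring
  set D := Real.exp (-A) with hD
  set E := Real.exp (A-B) with hE
  have hDval : D = Real.exp (-(r-x)^2/2) := by rw [hD, hA]; ring_nf
  have hBval : Real.exp (-(r+x)^2/2) = D * E := by
    rw [hD, hE, ← Real.exp_add, hA, hB]; ring_nf
  have hphi : phi (r - x) - phi (r + x) = c * (D * (1 - E)) := by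
    unfold phi
    rw [← hDval, hBval, ← hcdef]
    ring
  have hE1 : E ≤ 1 := Real.exp_le_one_iff.2 (by linarith)
  have hEexp : E * Real.exp (B - A) = 1 := by
    rw [hE, ← Real.exp_add]
    norm_num
  have hEbound : E * (1 + u) ≤ 1 := by
    have h := Real.add_one_le_exp (B - A)
    have hEpos : 0 < E := Real.exp_pos _
    calc E * (1+u) = E * (1 + (B-A)) := by rw [hBA]
      _ ≤ E * Real.exp (B-A) := mul_le_mul_of_nonneg_left (by linarith) hEpos.le
      _ = 1 := hEexp
  have hE0 : 0 ≤ E := (Real.exp_pos _).le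
  have k1 : u/3 ≤ 1 - E := by nlinarith [mul_nonneg (sub_nonneg.2 hE1) (by linarith : (0:ℝ) ≤ 2 - u)]
  have hD2 : 1/2 ≤ D := by
    have hA12 : A ≤ 1/2 := by rw [hA]; nlinarith
    have h := Real.add_one_le_exp (-A)
    rw [hD]; linarith
  have hD0 : (0:ℝ) ≤ D := (Real.exp_pos _).le
  have hc0 : (0:ℝ) ≤ c := by rw [hcdef]; positivity
  have k4 : (1/2) * (u/3) ≤ D * (1 - E) := mul_le_mul hD2 k1 (by positivity) hD0
  have k5 : (3/8) * ((1/2)*(u/3)) ≤ c * (D * (1-E)) :=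
    mul_le_mul hc k4 (by positivity) hc0
  rw [hphi]
  have hueq : u = 2*r*x := hu
  linarith



lemma cont_diff_fun (r : ℝ) : Continuous fun x : ℝ => phi (r - x) - phi (r + x) :=
  (phi_cont.comp (continuous_const.sub continuous_id)).sub
    (phi_cont.comp (continuous_const.add continuous_id))

lemma K_nonneg {s r : ℝ} (hs : 0 ≤ s) (hr : 0 ≤ r) :
    0 ≤ P (-r) r - P (-s - r) (-s + r) := by
  rw [K_eq]
  exact intervalIntegral.integral_nonneg hs fun x hx => diff_nonneg hr hx.1

lemma K_le {s r : ℝ} (hs : 0 ≤ s) (hr : 0 ≤ r) :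
    P (-r) r - P (-s - r) (-s + r) ≤ min (s^2) 1 * min 1 r := by
  rcases le_total s 1 with h1 | h1
  · rw [K_eq]
    have mono : (∫ x in (0:ℝ)..s, (phi (r-x) - phi (r+x))) ≤ ∫ x in (0:ℝ)..s, x * min r 2 :=
      intervalIntegral.integral_mono_on hs ((cont_diff_fun r).intervalIntegrable 0 s)
        ((continuous_id.mul continuous_const).intervalIntegrable 0 s)
        (fun x hx => key_upper hr hx.1 (le_trans hx.2 h1))
    have eval : (∫ x in (0:ℝ)..s, x * min r 2) = s^2/2 * min r 2 := by
      rw [intervalIntegral.integral_mul_const, integral_id]; ring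
    have final : s^2/2 * min r 2 ≤ min (s^2) 1 * min 1 r := by
      rw [min_eq_left (by nlinarith : s^2 ≤ 1)]
      rcases le_total r 1 with h2 | h2
      · rw [min_eq_right h2, min_eq_left (by linarith : r ≤ 2)]
        nlinarith [sq_nonneg s]
      · rw [min_eq_left h2]
        rcases le_total r 2 with h3 | h3
        · rw [min_eq_left h3]; nlinarith [sq_nonneg s]
        · rw [min_eq_right h3]; nlinarith [sq_nonneg s]
    linarith
  · have hm : min (s^2) 1 = 1 := min_eq_right (by nlinarith)
    rw [hm, one_mul]
    have h2 : 0 ≤ P (-s - r) (-s + r) := P_nonneg (by linarith)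
    have h3 : P (-r) r ≤ min 1 r := by
      refine le_min (P_le_one (by linarith)) ?_
      have hm2 : P (-r) r ≤ ∫ x in (-r)..r, (1/2 : ℝ) :=
        intervalIntegral.integral_mono_on (by linarith) (phi_ii _ _)
          intervalIntegrable_const (fun x _ => phi_le_half x)
      rw [intervalIntegral.integral_const, smul_eq_mul] at hm2
      linarith
    linarith

lemma K_ge {s r : ℝ} (hs : 0 ≤ s) (hr0 : 0 ≤ r) (hr1 : r ≤ 1) :
    min (s^2) 1 * r / 16 ≤ P (-r) r - P (-s - r) (-s + r) := by
  rw [K_eq]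
  set s1 := min s 1 with hs1
  have hs10 : 0 ≤ s1 := le_min hs zero_le_one
  have hs11 : s1 ≤ 1 := min_le_right _ _
  have hs1s : s1 ≤ s := min_le_left _ _
  have split : (∫ x in (0:ℝ)..s, (phi (r-x) - phi (r+x))) =
      (∫ x in (0:ℝ)..s1, (phi (r-x) - phi (r+x))) + ∫ x in s1..s, (phi (r-x) - phi (r+x)) :=
    (intervalIntegral.integral_add_adjacent_intervals
      ((cont_diff_fun r).intervalIntegrable 0 s1) ((cont_diff_fun r).intervalIntegrable s1 s)).symm
  have h2 : 0 ≤ ∫ x in s1..s, (phi (r-x) - phi (r+x)) :=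
    intervalIntegral.integral_nonneg hs1s (fun x hx => diff_nonneg hr0 (le_trans hs10 hx.1))
  have h1 : (∫ x in (0:ℝ)..s1, r*x/8) ≤ ∫ x in (0:ℝ)..s1, (phi (r-x) - phi (r+x)) :=
    intervalIntegral.integral_mono_on hs10
      ((continuous_const.mul continuous_id |>.div_const 8).intervalIntegrable 0 s1)
      ((cont_diff_fun r).intervalIntegrable 0 s1)
      (fun x hx => key_lower hr0 hr1 hx.1 (le_trans hx.2 hs11))
  have eval : (∫ x in (0:ℝ)..s1, r*x/8) = r * s1^2/16 := by
    have hfe : (fun x:ℝ => r*x/8) = fun x : ℝ => x * (r/8) := by funext x; ring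
    rw [show (∫ x in (0:ℝ)..s1, r*x/8) = ∫ x in (0:ℝ)..s1, x * (r/8) from by rw [hfe],
      intervalIntegral.integral_mul_const, integral_id]
    ring
  have hsq : s1^2 = min (s^2) 1 := by
    rcases le_total s 1 with h | h
    · rw [hs1, min_eq_left h, min_eq_left (by nlinarith)]
    · rw [hs1, min_eq_right h, min_eq_right (by nlinarith), one_pow]
  rw [split, ← hsq]
  linarith

lemma Pterm_int (s : ℝ) (d : ℝ) :
    IntegrableOn (fun t => P (-s - t⁻¹) (-s + t⁻¹)) (Ioc 0 d) volume := by
  have hG : Continuous (fun x : ℝ => ∫ u in (0:ℝ)..x, phi u) :=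
    intervalIntegral.continuous_primitive phi_ii 0
  have hP : ∀ a b : ℝ, P a b = (∫ u in (0:ℝ)..b, phi u) - ∫ u in (0:ℝ)..a, phi u := by
    intro a b
    have := intervalIntegral.integral_add_adjacent_intervals (phi_ii 0 a) (phi_ii a b)
    unfold P at *
    linarith
  have hinv : ContinuousOn (fun t : ℝ => t⁻¹) (Ioc 0 d) :=
    continuousOn_inv₀.mono (fun t ht => mem_compl_singleton_iff.mpr ht.1.ne')
  have hcont : ContinuousOn (fun t => P (-s - t⁻¹) (-s + t⁻¹)) (Ioc 0 d) := by
    simp only [hP]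
    exact (hG.comp_continuousOn (continuousOn_const.add hinv)).sub
      (hG.comp_continuousOn (continuousOn_const.sub hinv))
  refine Integrable.mono' (integrable_const (1:ℝ)) (hcont.aestronglyMeasurable measurableSet_Ioc) ?_
  refine (ae_restrict_iff' measurableSet_Ioc).2 (ae_of_all _ fun t ht => ?_)
  have h0 : 0 ≤ t⁻¹ := inv_nonneg.2 ht.1.le
  have hab : -s - t⁻¹ ≤ -s + t⁻¹ := by linarith
  rw [Real.norm_eq_abs, abs_of_nonneg (P_nonneg hab)]
  exact P_le_one hab

lemma inv_int (b : ℝ) : IntegrableOn (fun t : ℝ => t⁻¹) (Ioc 1 b) volume := by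
  have h : ContinuousOn (fun t : ℝ => t⁻¹) (Icc 1 b) :=
    continuousOn_inv₀.mono (fun t ht => mem_compl_singleton_iff.mpr (by linarith [ht.1] : t ≠ 0))
  exact h.integrableOn_Icc.mono_set Ioc_subset_Icc_self

lemma integral_inv_Ioc {b : ℝ} (hb : 1 ≤ b) : (∫ t in Ioc 1 b, t⁻¹) = Real.log b := by
  rw [← intervalIntegral.integral_of_le hb, integral_inv_of_pos one_pos (by linarith), div_one]



lemma min_intOn {a b : ℝ} (ha : 0 ≤ a) : IntegrableOn (fun t : ℝ => min 1 t⁻¹) (Ioc a b) volume := by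
  refine Integrable.mono' (integrable_const (1:ℝ))
    ((measurable_const.min measurable_inv).aestronglyMeasurable) ?_
  refine (ae_restrict_iff' measurableSet_Ioc).2 (ae_of_all _ fun t ht => ?_)
  have h0 : 0 ≤ t⁻¹ := inv_nonneg.2 (le_trans ha ht.1.le)
  rw [Real.norm_eq_abs, abs_of_nonneg (le_min zero_le_one h0)]
  exact min_le_left _ _

end Stmt18

open Stmt18

/-- There are `c, C > 0` such that for every `d ≥ 2` and every real `s`:
`c·min(s²,1)·ln d ≤ μ̃_d(0) − μ̃_d(s) ≤ C·min(s²,1)·ln d`. -/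
theorem stmt18 :
    ∃ c C : ℝ, 0 < c ∧ 0 < C ∧ ∀ d : ℕ, 2 ≤ d → ∀ s : ℝ,
      c * min (s ^ 2) 1 * Real.log d ≤ tmu d 0 - tmu d s ∧
      tmu d 0 - tmu d s ≤ C * min (s ^ 2) 1 * Real.log d := by
  refine ⟨1/16, 3, by norm_num, by norm_num, fun d hd s => ?_⟩
  have hd1 : (1:ℝ) ≤ (d:ℝ) := by exact_mod_cast Nat.one_le_of_lt hd
  have hd2 : (2:ℝ) ≤ (d:ℝ) := by exact_mod_cast hd
  have hlog2 : (0.6931471803 : ℝ) < Real.log 2 := Real.log_two_gt_d9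
  have hlog : Real.log 2 ≤ Real.log d := Real.log_le_log (by norm_num) hd2
  have hlogpos : 0 < Real.log (d:ℝ) := by linarith
  set σ := |s| with hσ
  have hσ0 : 0 ≤ σ := abs_nonneg s
  have hmeq : min (s^2) 1 = min (σ^2) 1 := by rw [hσ, sq_abs]
  set m := min (σ^2) 1 with hmdef
  have hm0 : 0 ≤ m := le_min (sq_nonneg σ) zero_le_one
  have hm1 : m ≤ 1 := min_le_right _ _
  -- representations
  have rep0 : tmu d 0 = ∫ t in Ioc 0 (d:ℝ), P (-t⁻¹) t⁻¹ := by
    rw [tmu_rep d 0]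
    simp only [neg_zero, zero_sub, zero_add]
  have tmusym : tmu d s = tmu d σ := by
    rcases abs_cases s with ⟨h, -⟩ | ⟨h, -⟩
    · rw [hσ, h]
    · rw [hσ, h]
      rw [tmu_rep d s, tmu_rep d (-s)]
      refine setIntegral_congr_fun measurableSet_Ioc fun t ht => ?_
      rw [neg_neg]
      exact P_symm_center s t⁻¹
  have reps : tmu d s = ∫ t in Ioc 0 (d:ℝ), P (-σ - t⁻¹) (-σ + t⁻¹) := by
    rw [tmusym, tmu_rep d σ]
  have i0 : IntegrableOn (fun t : ℝ => P (-t⁻¹) t⁻¹) (Ioc 0 (d:ℝ)) volume := by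
    have h := Pterm_int 0 (d:ℝ)
    simpa only [neg_zero, zero_sub, zero_add] using h
  have is : IntegrableOn (fun t : ℝ => P (-σ - t⁻¹) (-σ + t⁻¹)) (Ioc 0 (d:ℝ)) volume :=
    Pterm_int σ (d:ℝ)
  have hD : tmu d 0 - tmu d s
      = ∫ t in Ioc 0 (d:ℝ), (P (-t⁻¹) t⁻¹ - P (-σ - t⁻¹) (-σ + t⁻¹)) := by
    rw [rep0, reps, ← integral_sub i0 is]
  have hsub : Ioc (1:ℝ) (d:ℝ) ⊆ Ioc 0 (d:ℝ) := Ioc_subset_Ioc_left (by norm_num)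
  have hsplit : Ioc (0:ℝ) (d:ℝ) = Ioc 0 1 ∪ Ioc 1 (d:ℝ) :=
    (Ioc_union_Ioc_eq_Ioc (by norm_num) hd1).symm
  have hdisj : Disjoint (Ioc (0:ℝ) 1) (Ioc (1:ℝ) (d:ℝ)) := Ioc_disjoint_Ioc_of_le le_rfl
  constructor
  · -- lower bound
    have hKint : IntegrableOn (fun t : ℝ => P (-t⁻¹) t⁻¹ - P (-σ - t⁻¹) (-σ + t⁻¹))
        (Ioc 0 (d:ℝ)) volume := i0.sub is
    have lowsplit : (∫ t in Ioc 0 (d:ℝ), (P (-t⁻¹) t⁻¹ - P (-σ - t⁻¹) (-σ + t⁻¹)))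
        = (∫ t in Ioc (0:ℝ) 1, (P (-t⁻¹) t⁻¹ - P (-σ - t⁻¹) (-σ + t⁻¹)))
          + ∫ t in Ioc (1:ℝ) (d:ℝ), (P (-t⁻¹) t⁻¹ - P (-σ - t⁻¹) (-σ + t⁻¹)) := by
      rw [hsplit]
      exact setIntegral_union hdisj measurableSet_Ioc
        (hKint.mono_set (by rw [hsplit]; exact subset_union_left))
        (hKint.mono_set (by rw [hsplit]; exact subset_union_right))
    have l1 : 0 ≤ ∫ t in Ioc (0:ℝ) 1, (P (-t⁻¹) t⁻¹ - P (-σ - t⁻¹) (-σ + t⁻¹)) :=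
      setIntegral_nonneg measurableSet_Ioc fun t ht => K_nonneg hσ0 (inv_nonneg.2 ht.1.le)
    have l2 : (∫ t in Ioc (1:ℝ) (d:ℝ), m/16 * t⁻¹)
        ≤ ∫ t in Ioc (1:ℝ) (d:ℝ), (P (-t⁻¹) t⁻¹ - P (-σ - t⁻¹) (-σ + t⁻¹)) := by
      refine setIntegral_mono_on ((inv_int (d:ℝ)).const_mul (m/16)) (hKint.mono_set hsub)
        measurableSet_Ioc fun t ht => ?_
      have ht0 : (0:ℝ) < t := lt_trans one_pos ht.1
      have h0 : 0 < t⁻¹ := inv_pos.2 ht0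
      have hle1 : t⁻¹ ≤ 1 := by
        rw [inv_le_one_iff₀]
        right; exact ht.1.le
      have := K_ge hσ0 h0.le hle1 (s := σ)
      calc m/16 * t⁻¹ = min (σ^2) 1 * t⁻¹ / 16 := by rw [← hmdef]; ring
        _ ≤ _ := this
    have l3 : (∫ t in Ioc (1:ℝ) (d:ℝ), m/16 * t⁻¹) = m/16 * Real.log d := by
      rw [integral_const_mul, integral_inv_Ioc hd1]
    rw [hD, lowsplit, hmeq]
    calc 1/16 * m * Real.log (d:ℝ) = m/16 * Real.log (d:ℝ) := by ring
      _ ≤ _ := by linarith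
  · -- upper bound
    have up1 : (∫ t in Ioc 0 (d:ℝ), (P (-t⁻¹) t⁻¹ - P (-σ - t⁻¹) (-σ + t⁻¹)))
        ≤ ∫ t in Ioc 0 (d:ℝ), m * min 1 t⁻¹ := by
      have hKint : IntegrableOn (fun t : ℝ => P (-t⁻¹) t⁻¹ - P (-σ - t⁻¹) (-σ + t⁻¹))
          (Ioc 0 (d:ℝ)) volume := i0.sub is
      refine setIntegral_mono_on hKint ((min_intOn le_rfl).const_mul m)
        measurableSet_Ioc fun t ht => ?_
      have h0 : 0 < t⁻¹ := inv_pos.2 ht.1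
      exact K_le hσ0 h0.le
    have up2 : (∫ t in Ioc 0 (d:ℝ), m * min 1 t⁻¹) = m * (1 + Real.log d) := by
      rw [integral_const_mul]
      congr 1
      rw [hsplit, setIntegral_union hdisj measurableSet_Ioc (min_intOn le_rfl)
        (min_intOn zero_le_one)]
      have e1 : (∫ t in Ioc (0:ℝ) 1, min 1 t⁻¹) = 1 := by
        rw [setIntegral_congr_fun measurableSet_Ioc
          (fun t ht => min_eq_left ((le_inv_comm₀ one_pos ht.1).2 (by simpa using ht.2)))]
        simp
      have e2 : (∫ t in Ioc (1:ℝ) (d:ℝ), min 1 t⁻¹) = Real.log d := by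
        rw [setIntegral_congr_fun measurableSet_Ioc
          (fun t ht => min_eq_right (by rw [inv_le_one_iff₀]; right; exact ht.1.le))]
        exact integral_inv_Ioc hd1
      rw [e1, e2]
    rw [hD, hmeq]
    calc (∫ t in Ioc 0 (d:ℝ), (P (-t⁻¹) t⁻¹ - P (-σ - t⁻¹) (-σ + t⁻¹)))
        ≤ m * (1 + Real.log d) := by rw [← up2]; exact up1
      _ ≤ 3 * m * Real.log (d:ℝ) := by
          nlinarith [mul_nonneg hm0 (by linarith : (0:ℝ) ≤ 2 * Real.log (d:ℝ) - 1)]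
end
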